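/- arXiv:1908.08324 — 2 statements merged into one kernel-verified Lean document; each statement's English description precedes it below -/
import Mathlib

section
/- Let H ⊆ 𝒫(I) be a simply connected combinatorial strata structure with minimal set of indices I such that H = H_3 (every stratum has at most 3 elements). Let ∞ ∉ I and let B ⊆ H be a subset that is closed under taking subsets, contains only strata with at most 2 elements, satisfies B ∩ H(1) ≠ ∅, and is such that B ∩ H(1) is 1-connected in B. Then H′ = H ∪ {J ∪ {∞} : J ∈ B} is a simply connected combinatorial strata structure with minimal set of indices I ∪ {∞}. -/
/-- A combinatorial strata structure with minimal set of indices the (finite) type `I`: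
an open subset of `𝒫(I)` (i.e. a family closed under taking subsets) containing all
singletons. -/
def IsCSS {I : Type*} (H : Set (Finset I)) : Prop :=
  (∀ J ∈ H, ∀ J' : Finset I, J' ⊆ J → J' ∈ H) ∧ ∀ i : I, ({i} : Finset I) ∈ H

/-- `level H k` is `H(k)`, the set of strata of `H` with exactly `k` elements. -/
def level {I : Type*} (H : Set (Finset I)) (k : ℕ) : Set (Finset I) :=
  {J ∈ H | J.card = k}

/-- A `k`-path in `H`: a nonempty sequence of strata of `H(k)` such that the union of
any two consecutive entries lies in `H(k+1)`. -/
def IsKPath {I : Type*} [DecidableEq I] (H : Set (Finset I)) (k : ℕ)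
    (γ : List (Finset I)) : Prop :=
  γ ≠ [] ∧ (∀ J ∈ γ, J ∈ level H k) ∧
    γ.Chain' fun J J' => (J ∪ J') ∈ level H (k + 1)

/-- The path `γ` joins `J` and `J'`. -/
def Joins {I : Type*} (γ : List (Finset I)) (J J' : Finset I) : Prop :=
  γ.head? = some J ∧ γ.getLast? = some J'

/-- The subsupport of a path: the sequence of unions of consecutive entries. -/
def subSup {I : Type*} [DecidableEq I] (γ : List (Finset I)) : List (Finset I) :=
  List.zipWith (· ∪ ·) γ γ.tail

open Classical in
/-- `kappa B γ`: the number of entries of the subsupport of `γ` that belong to `B`. -/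
noncomputable def kappa {I : Type*} [DecidableEq I] (B : Set (Finset I))
    (γ : List (Finset I)) : ℕ :=
  (subSup γ).countP fun J => decide (J ∈ B)

/-- `A` is `k`-connected in `H`: any two elements of `A` are joined by a `k`-path in `H`
with support contained in `A`. -/
def KConnectedIn {I : Type*} [DecidableEq I] (H : Set (Finset I)) (k : ℕ)
    (A : Set (Finset I)) : Prop :=
  ∀ J ∈ A, ∀ J' ∈ A, ∃ γ : List (Finset I),
    IsKPath H k γ ∧ Joins γ J J' ∧ ∀ K ∈ γ, K ∈ A

/-- `C` is a `k`-connected component of `A` in `H`: a maximal nonempty `k`-connected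
subset of `A`. -/
def IsKComponent {I : Type*} [DecidableEq I] (H : Set (Finset I)) (k : ℕ)
    (A C : Set (Finset I)) : Prop :=
  C.Nonempty ∧ C ⊆ A ∧ KConnectedIn H k C ∧
    ∀ C' : Set (Finset I), C ⊆ C' → C' ⊆ A → KConnectedIn H k C' → C' = C

/-- `H` is 1-connected: `H(1)` is 1-connected in `H`. -/
def OneConnected {I : Type*} [DecidableEq I] (H : Set (Finset I)) : Prop :=
  KConnectedIn H 1 (level H 1)

/-- One-sided version of an elementary homotopic pair of 1-paths in `H`. -/
def ElemPairCore {I : Type*} [DecidableEq I] (H : Set (Finset I))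
    (ε ε' : List (Finset I)) : Prop :=
  ε = ε'
  ∨ (∃ i₁ i₂ : I, ε = [{i₁}, {i₂}, {i₁}] ∧ ε' = [{i₁}])
  ∨ (∃ i₁ i₂ i₃ : I, ε = [{i₁}, {i₂}] ∧ ε' = [{i₁}, {i₃}, {i₂}] ∧
      IsKPath H 2 [{i₁, i₃}, {i₃, i₂}])

/-- An elementary homotopic pair of 1-paths in `H` (up to swapping the two paths). -/
def ElemPair {I : Type*} [DecidableEq I] (H : Set (Finset I))
    (ε ε' : List (Finset I)) : Prop :=
  ElemPairCore H ε ε' ∨ ElemPairCore H ε' ε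

/-- `γ₂` is obtained from `γ₁` by an elementary homotopy. -/
def ElemHomotopy {I : Type*} [DecidableEq I] (H : Set (Finset I))
    (γ₁ γ₂ : List (Finset I)) : Prop :=
  ∃ δ ε₁ ε₂ ρ : List (Finset I),
    ElemPair H ε₁ ε₂ ∧ γ₁ = δ ++ ε₁ ++ ρ ∧ γ₂ = δ ++ ε₂ ++ ρ

/-- `γ` and `γ'` are homotopically equivalent in `H` with support in `A`: they are linked
by a finite chain of elementary homotopies in which every intermediate 1-path has
support in `A`. -/
def HomotopicIn {I : Type*} [DecidableEq I] (H A : Set (Finset I))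
    (γ γ' : List (Finset I)) : Prop :=
  (IsKPath H 1 γ ∧ ∀ J ∈ γ, J ∈ A) ∧
    Relation.ReflTransGen
      (fun g₁ g₂ => ElemHomotopy H g₁ g₂ ∧ IsKPath H 1 g₂ ∧ ∀ J ∈ g₂, J ∈ A) γ γ'

/-- A 1-connected subset `A ⊆ H(1)` is simply connected in `H`: any two 1-paths in `H`
with support in `A` joining the same strata are homotopically equivalent in `H` with
support in `A`. -/
def SimplyConnectedIn {I : Type*} [DecidableEq I] (H A : Set (Finset I)) : Prop :=
  KConnectedIn H 1 A ∧
    ∀ γ γ' : List (Finset I), IsKPath H 1 γ → IsKPath H 1 γ' →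
      (∀ J ∈ γ, J ∈ A) → (∀ J ∈ γ', J ∈ A) →
      γ.head? = γ'.head? → γ.getLast? = γ'.getLast? →
      HomotopicIn H A γ γ'

/-- `H` is simply connected: `H(1)` is simply connected in `H`. -/
def SimplyConnected {I : Type*} [DecidableEq I] (H : Set (Finset I)) : Prop :=
  SimplyConnectedIn H (level H 1)

/-- `H_3 = {∅} ∪ H(1) ∪ H(2) ∪ H(3)`. -/
def H3 {I : Type*} (H : Set (Finset I)) : Set (Finset I) :=
  {(∅ : Finset I)} ∪ level H 1 ∪ level H 2 ∪ level H 3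

/-- A combinatorial strata structure with minimal set of indices the finite set `I ⊆ α`:
a family of subsets of `I` closed under taking subsets and containing all singletons
`{i}`, `i ∈ I`. -/
def IsCSSOn {α : Type*} (I : Finset α) (H : Set (Finset α)) : Prop :=
  (∀ J ∈ H, J ⊆ I) ∧ (∀ J ∈ H, ∀ J' : Finset α, J' ⊆ J → J' ∈ H) ∧
    ∀ i ∈ I, ({i} : Finset α) ∈ H

namespace BlowupAux
set_option linter.unusedSectionVars false

variable {α : Type*} [DecidableEq α]

/-- A path that is a valid 1-path with support in `A`. -/
def Good (H A : Set (Finset α)) (γ : List (Finset α)) : Prop :=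
  IsKPath H 1 γ ∧ ∀ J ∈ γ, J ∈ A

/-- One step of homotopy with good target. -/
def Step (H A : Set (Finset α)) (γ₁ γ₂ : List (Finset α)) : Prop :=
  ElemHomotopy H γ₁ γ₂ ∧ Good H A γ₂

lemma homotopicIn_iff {H A : Set (Finset α)} {γ γ' : List (Finset α)} :
    HomotopicIn H A γ γ' ↔ Good H A γ ∧ Relation.ReflTransGen (Step H A) γ γ' := Iff.rfl

lemma elemPairCore_head {H : Set (Finset α)} {ε ε' : List (Finset α)}
    (h : ElemPairCore H ε ε') : ε.head? = ε'.head? ∧ ε.getLast? = ε'.getLast? := by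
  rcases h with rfl | ⟨i₁, i₂, rfl, rfl⟩ | ⟨i₁, i₂, i₃, rfl, rfl, -⟩ <;> simp

lemma elemPair_head {H : Set (Finset α)} {ε ε' : List (Finset α)}
    (h : ElemPair H ε ε') : ε.head? = ε'.head? ∧ ε.getLast? = ε'.getLast? := by
  rcases h with h | h
  · exact elemPairCore_head h
  · exact ⟨(elemPairCore_head h).1.symm, (elemPairCore_head h).2.symm⟩

lemma elemHomotopy_head {H : Set (Finset α)} {γ₁ γ₂ : List (Finset α)}
    (h : ElemHomotopy H γ₁ γ₂) :
    γ₁.head? = γ₂.head? ∧ γ₁.getLast? = γ₂.getLast? := by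
  obtain ⟨δ, ε₁, ε₂, ρ, hp, rfl, rfl⟩ := h
  obtain ⟨h1, h2⟩ := elemPair_head hp
  constructor
  · simp [List.head?_append, h1]
  · simp [List.getLast?_append, h2]

lemma level_mono {H H' : Set (Finset α)} (h : H ⊆ H') (k : ℕ) :
    level H k ⊆ level H' k := fun _ hJ => ⟨h hJ.1, hJ.2⟩

lemma isKPath_mono {H H' : Set (Finset α)} (h : H ⊆ H') {k : ℕ} {γ : List (Finset α)}
    (hγ : IsKPath H k γ) : IsKPath H' k γ :=
  ⟨hγ.1, fun J hJ => level_mono h k (hγ.2.1 J hJ), hγ.2.2.imp fun _ _ hx => level_mono h _ hx⟩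

lemma elemPairCore_mono {H H' : Set (Finset α)} (h : H ⊆ H') {ε ε' : List (Finset α)}
    (hp : ElemPairCore H ε ε') : ElemPairCore H' ε ε' := by
  rcases hp with h1 | h1 | ⟨i₁, i₂, i₃, h1, h2, h3⟩
  · exact Or.inl h1
  · exact Or.inr (Or.inl h1)
  · exact Or.inr (Or.inr ⟨i₁, i₂, i₃, h1, h2, isKPath_mono h h3⟩)

lemma elemPair_mono {H H' : Set (Finset α)} (h : H ⊆ H') {ε ε' : List (Finset α)}
    (hp : ElemPair H ε ε') : ElemPair H' ε ε' :=
  hp.imp (elemPairCore_mono h) (elemPairCore_mono h)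

lemma elemHomotopy_mono {H H' : Set (Finset α)} (h : H ⊆ H') {γ₁ γ₂ : List (Finset α)}
    (hp : ElemHomotopy H γ₁ γ₂) : ElemHomotopy H' γ₁ γ₂ := by
  obtain ⟨δ, ε₁, ε₂, ρ, hp, h1, h2⟩ := hp
  exact ⟨δ, ε₁, ε₂, ρ, elemPair_mono h hp, h1, h2⟩

lemma good_mono {H H' A A' : Set (Finset α)} (hH : H ⊆ H') (hA : A ⊆ A')
    {γ : List (Finset α)} (hγ : Good H A γ) : Good H' A' γ :=
  ⟨isKPath_mono hH hγ.1, fun J hJ => hA (hγ.2 J hJ)⟩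

lemma homotopicIn_mono {H H' A A' : Set (Finset α)} (hH : H ⊆ H') (hA : A ⊆ A')
    {γ γ' : List (Finset α)} (h : HomotopicIn H A γ γ') : HomotopicIn H' A' γ γ' := by
  refine ⟨good_mono hH hA h.1, Relation.ReflTransGen.mono (fun g₁ g₂ hs => ?_) γ γ' h.2⟩
  exact ⟨elemHomotopy_mono hH hs.1, good_mono hH hA hs.2⟩

lemma good_of_rtg {H A : Set (Finset α)} {γ γ' : List (Finset α)} (hγ : Good H A γ)
    (h : Relation.ReflTransGen (Step H A) γ γ') : Good H A γ' := by
  induction h with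
  | refl => exact hγ
  | tail _ h₂ _ => exact h₂.2

lemma homotopicIn_refl {H A : Set (Finset α)} {γ : List (Finset α)} (h : Good H A γ) :
    HomotopicIn H A γ γ := ⟨h, .refl⟩

lemma homotopicIn_trans {H A : Set (Finset α)} {γ₁ γ₂ γ₃ : List (Finset α)}
    (h : HomotopicIn H A γ₁ γ₂) (h' : HomotopicIn H A γ₂ γ₃) :
    HomotopicIn H A γ₁ γ₃ := ⟨h.1, h.2.trans h'.2⟩

lemma elemHomotopy_symm {H : Set (Finset α)} {γ₁ γ₂ : List (Finset α)}
    (h : ElemHomotopy H γ₁ γ₂) : ElemHomotopy H γ₂ γ₁ := by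
  obtain ⟨δ, ε₁, ε₂, ρ, hp, h1, h2⟩ := h
  exact ⟨δ, ε₂, ε₁, ρ, hp.symm, h2, h1⟩

lemma homotopicIn_symm {H A : Set (Finset α)} {γ γ' : List (Finset α)}
    (h : HomotopicIn H A γ γ') : HomotopicIn H A γ' γ := by
  obtain ⟨hg, hr⟩ := h
  refine ⟨good_of_rtg hg hr, ?_⟩
  induction hr with
  | refl => exact .refl
  | @tail b c h₁ h₂ ih =>
    exact Relation.ReflTransGen.head ⟨elemHomotopy_symm h₂.1, good_of_rtg hg h₁⟩ ih

lemma homotopicIn_head {H A : Set (Finset α)} {γ γ' : List (Finset α)}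
    (h : HomotopicIn H A γ γ') :
    γ.head? = γ'.head? ∧ γ.getLast? = γ'.getLast? := by
  obtain ⟨-, hr⟩ := h
  induction hr with
  | refl => exact ⟨rfl, rfl⟩
  | tail _ h₂ ih =>
    obtain ⟨a, b⟩ := elemHomotopy_head h₂.1
    exact ⟨ih.1.trans a, ih.2.trans b⟩

lemma isKPath_append {H : Set (Finset α)} {k : ℕ} {γ₁ γ₂ : List (Finset α)}
    (h1 : IsKPath H k γ₁) (h2 : IsKPath H k γ₂)
    (hj : ∀ x ∈ γ₁.getLast?, ∀ y ∈ γ₂.head?, x ∪ y ∈ level H (k + 1)) :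
    IsKPath H k (γ₁ ++ γ₂) := by
  refine ⟨by simp [h1.1], ?_, ?_⟩
  · intro J hJ
    rcases List.mem_append.1 hJ with hJ | hJ
    · exact h1.2.1 J hJ
    · exact h2.2.1 J hJ
  · exact List.isChain_append.2 ⟨h1.2.2, h2.2.2, hj⟩

lemma isKPath_glue {H : Set (Finset α)} {k : ℕ} {δ σ ρ g : List (Finset α)}
    (h : IsKPath H k (δ ++ σ ++ ρ)) (hg : IsKPath H k g)
    (hh : g.head? = σ.head?) (hl : g.getLast? = σ.getLast?) :
    IsKPath H k (δ ++ g ++ ρ) := by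
  have hne : g ≠ [] := hg.1
  refine ⟨by simp [hne], ?_, ?_⟩
  · intro J hJ
    rcases List.mem_append.1 hJ with hJ | hJ
    · rcases List.mem_append.1 hJ with hJ | hJ
      · exact h.2.1 J (by simp [hJ])
      · exact hg.2.1 J hJ
    · exact h.2.1 J (by simp [hJ])
  · have hc := h.2.2
    unfold List.Chain' at hc ⊢; rw [List.isChain_append, List.isChain_append] at hc ⊢
    obtain ⟨⟨c1, c2, c3⟩, c4, c5⟩ := hc
    refine ⟨⟨c1, hg.2.2, ?_⟩, c4, ?_⟩
    · intro x hx y hy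
      exact c3 x hx y (by rwa [hh] at hy)
    · intro x hx y hy
      rw [List.getLast?_append] at hx
      refine c5 x ?_ y hy
      rw [List.getLast?_append, ← hl]
      exact hx

end BlowupAux
namespace BlowupAux
set_option linter.unusedSectionVars false

variable {α : Type*} [DecidableEq α]

lemma good_glue {H A : Set (Finset α)} {δ σ ρ g : List (Finset α)}
    (h : Good H A (δ ++ σ ++ ρ)) (hg : Good H A g)
    (hh : g.head? = σ.head?) (hl : g.getLast? = σ.getLast?) :
    Good H A (δ ++ g ++ ρ) := by
  refine ⟨isKPath_glue h.1 hg.1 hh hl, ?_⟩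
  intro J hJ
  rcases List.mem_append.1 hJ with hJ | hJ
  · rcases List.mem_append.1 hJ with hJ | hJ
    · exact h.2 J (by simp [hJ])
    · exact hg.2 J hJ
  · exact h.2 J (by simp [hJ])

/-- Congruence: a homotopy between segments extends to a homotopy in context. -/
lemma homotopicIn_cong {H A : Set (Finset α)} {δ ρ σ σ' : List (Finset α)}
    (h : HomotopicIn H A σ σ') (hw : Good H A (δ ++ σ ++ ρ)) :
    HomotopicIn H A (δ ++ σ ++ ρ) (δ ++ σ' ++ ρ) := by
  obtain ⟨hgσ, hr⟩ := h
  refine ⟨hw, ?_⟩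
  have key : ∀ b, Relation.ReflTransGen (Step H A) σ b →
      Relation.ReflTransGen (Step H A) (δ ++ σ ++ ρ) (δ ++ b ++ ρ) ∧
        b.head? = σ.head? ∧ b.getLast? = σ.getLast? := by
    intro b hb
    induction hb with
    | refl => exact ⟨.refl, rfl, rfl⟩
    | @tail b c h₁ h₂ ih =>
      obtain ⟨ihr, ihh, ihl⟩ := ih
      obtain ⟨he, hgc⟩ := h₂
      obtain ⟨hh, hl⟩ := elemHomotopy_head he
      have hgoodb : Good H A (δ ++ b ++ ρ) :=
        good_glue hw (good_of_rtg hgσ h₁) ihh ihl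
      have hgoodc : Good H A (δ ++ c ++ ρ) :=
        good_glue hw hgc (hh ▸ ihh) (hl ▸ ihl)
      obtain ⟨d, ε₁, ε₂, r, hp, hb1, hb2⟩ := he
      refine ⟨ihr.tail ⟨⟨δ ++ d, ε₁, ε₂, r ++ ρ, hp, ?_, ?_⟩, hgoodc⟩,
        hh ▸ ihh, hl ▸ ihl⟩
      · subst hb1; simp
      · subst hb2; simp
  exact (key σ' hr).1
end BlowupAux
namespace BlowupAux
set_option linter.unusedSectionVars false

variable {α : Type*} [DecidableEq α] {infty : α} {H B : Set (Finset α)}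

/-- The blown-up family. -/
def ext (infty : α) (H B : Set (Finset α)) : Set (Finset α) :=
  H ∪ {K | ∃ J ∈ B, K = insert infty J}

lemma chain'_imp_mem {β : Type*} {R S : β → β → Prop} {l : List β}
    (h : ∀ a ∈ l, ∀ b ∈ l, R a b → S a b) (hc : l.Chain' R) : l.Chain' S := by
  induction l with
  | nil => exact List.IsChain.nil
  | cons x t ih =>
    unfold List.Chain' at hc ⊢; rw [List.isChain_cons] at hc ⊢
    refine ⟨fun y hy => h x (by simp) y ?_ (hc.1 y hy), ?_⟩
    · cases t with
      | nil => simp at hy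
      | cons z t' => simp at hy; simp [hy]
    · exact ih (fun a ha b hb => h a (by simp [ha]) b (by simp [hb])) hc.2

section Basic

variable (hni : ∀ J ∈ H, infty ∉ J) (hBH : B ⊆ H)
include hni hBH

lemma card_insert_ext {J : Finset α} (hJ : J ∈ B) :
    (insert infty J).card = J.card + 1 :=
  Finset.card_insert_of_notMem (hni _ (hBH hJ))

lemma mem_level_insert {J : Finset α} (hJ : J ∈ B) :
    insert infty J ∈ level (ext infty H B) (J.card + 1) :=
  ⟨Or.inr ⟨J, hJ, rfl⟩, card_insert_ext hni hBH hJ⟩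

lemma infty_level {k : ℕ} {K : Finset α} (hK : K ∈ level (ext infty H B) k)
    (hmem : infty ∈ K) : ∃ J ∈ B, K = insert infty J ∧ J.card + 1 = k := by
  rcases hK.1 with h | ⟨J, hJ, rfl⟩
  · exact absurd hmem (hni _ h)
  · exact ⟨J, hJ, rfl, by rw [← hK.2, card_insert_ext hni hBH hJ]⟩

lemma noinf_level {k : ℕ} {K : Finset α} (hK : K ∈ level (ext infty H B) k)
    (hmem : infty ∉ K) : K ∈ level H k := by
  rcases hK.1 with h | ⟨J, hJ, rfl⟩
  · exact ⟨h, hK.2⟩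
  · exact absurd (Finset.mem_insert_self _ _) hmem

lemma level_one_cases {K : Finset α} (hK : K ∈ level (ext infty H B) 1) :
    K = {infty} ∨ K ∈ level H 1 := by
  by_cases hmem : infty ∈ K
  · obtain ⟨J, hJ, rfl, hcard⟩ := infty_level hni hBH hK hmem
    have : J = ∅ := Finset.card_eq_zero.1 (by omega)
    subst this; exact Or.inl rfl
  · exact Or.inr (noinf_level hni hBH hK hmem)

lemma infty_mem_level_one (hB0 : ∅ ∈ B) :
    ({infty} : Finset α) ∈ level (ext infty H B) 1 := by
  have := mem_level_insert hni hBH hB0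
  simpa using this

lemma neighbor_of_infty {K : Finset α} (hK : K ∈ level (ext infty H B) 1)
    (he : {infty} ∪ K ∈ level (ext infty H B) 2) :
    K ∈ B ∧ K ∈ level H 1 ∧ ∃ x, x ≠ infty ∧ K = {x} := by
  obtain ⟨x, rfl⟩ := Finset.card_eq_one.1 hK.2
  have hx : x ≠ infty := by
    rintro rfl
    have := he.2
    simp at this
  obtain ⟨J, hJ, hKe, -⟩ := infty_level hni hBH he (by simp)
  have hJx : J = {x} := by
    have h1 : ({infty} : Finset α) ∪ {x} = insert infty {x} := by
      rw [Finset.insert_eq]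
    rw [h1] at hKe
    have := congrArg (fun s => Finset.erase s infty) hKe
    simpa [Finset.erase_insert (by simp [Ne.symm hx] : infty ∉ ({x} : Finset α)),
      Finset.erase_insert (hni _ (hBH hJ))] using this.symm
  subst hJx
  exact ⟨hJ, ⟨hBH hJ, by simp⟩, x, hx, rfl⟩

lemma neighbor_of_infty' {K : Finset α} (hK : K ∈ level (ext infty H B) 1)
    (he : K ∪ {infty} ∈ level (ext infty H B) 2) :
    K ∈ B ∧ K ∈ level H 1 ∧ ∃ x, x ≠ infty ∧ K = {x} :=
  neighbor_of_infty hni hBH hK (by rwa [Finset.union_comm])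

/-- A 1-path in the extended family avoiding `{infty}` is a 1-path in `H`. -/
lemma noInf_path {γ : List (Finset α)} (hγ : IsKPath (ext infty H B) 1 γ)
    (hmem : ({infty} : Finset α) ∉ γ) : IsKPath H 1 γ := by
  have entries : ∀ J ∈ γ, J ∈ level H 1 := by
    intro J hJ
    rcases level_one_cases hni hBH (hγ.2.1 J hJ) with rfl | h
    · exact absurd hJ hmem
    · exact h
  refine ⟨hγ.1, entries, ?_⟩
  refine chain'_imp_mem (fun a ha b hb hr => ?_) hγ.2.2
  refine noinf_level hni hBH hr ?_
  have ha' := (entries a ha).1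
  have hb' := (entries b hb).1
  simp only [Finset.mem_union]
  rintro (h | h)
  · exact hni _ ha' h
  · exact hni _ hb' h

/-- Entries of a 1-path in `B` are good singletons. -/
lemma bpath_entry {π : List (Finset α)} (hπ : IsKPath B 1 π) {K : Finset α}
    (hK : K ∈ π) : K ∈ B ∧ K ∈ level H 1 ∧ ∃ x, x ≠ infty ∧ K = {x} := by
  have h1 := hπ.2.1 K hK
  obtain ⟨x, rfl⟩ := Finset.card_eq_one.1 h1.2
  refine ⟨h1.1, ⟨hBH h1.1, h1.2⟩, x, fun hx => ?_, rfl⟩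
  exact hni _ (hBH h1.1) (by simp [hx])

/-- A 1-path in `B` is a 1-path in `H`, and in the extended family. -/
lemma bpath_isKPath {π : List (Finset α)} (hπ : IsKPath B 1 π) :
    IsKPath H 1 π := isKPath_mono hBH hπ

lemma isKPath_ext_of_H {k : ℕ} {γ : List (Finset α)} (hγ : IsKPath H k γ) :
    IsKPath (ext infty H B) k γ := isKPath_mono Set.subset_union_left hγ

lemma good_of_bpath {π : List (Finset α)} (hπ : IsKPath B 1 π) :
    Good (ext infty H B) (level (ext infty H B) 1) π := by
  refine ⟨isKPath_ext_of_H hni hBH (bpath_isKPath hni hBH hπ), fun J hJ => ?_⟩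
  exact level_mono Set.subset_union_left 1 (bpath_entry hni hBH hπ hJ).2.1

end Basic
end BlowupAux
namespace BlowupAux
set_option linter.unusedSectionVars false
set_option maxHeartbeats 1000000

variable {α : Type*} [DecidableEq α] {infty : α} {H B : Set (Finset α)}

lemma isKPath_of_cons {Hh : Set (Finset α)} {k : ℕ} {x : Finset α} {t : List (Finset α)}
    (h : IsKPath Hh k (x :: t)) (ht : t ≠ []) : IsKPath Hh k t :=
  ⟨ht, fun J hJ => h.2.1 J (by simp [hJ]), (List.isChain_cons.1 h.2.2).2⟩

section Seg

variable (hni : ∀ J ∈ H, infty ∉ J) (hBH : B ⊆ H) (hB0 : ∅ ∈ B)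
include hni hBH

lemma B_subset_ext : B ⊆ ext infty H B := fun _ h => Or.inl (hBH h)

lemma infty_union_mem {p : Finset α} (hp : p ∈ B) (hc : p.card = 1) :
    ({infty} : Finset α) ∪ p ∈ level (ext infty H B) 2 := by
  rw [← Finset.insert_eq]
  have := mem_level_insert hni hBH hp
  rwa [hc] at this

lemma union_infty_mem {p : Finset α} (hp : p ∈ B) (hc : p.card = 1) :
    p ∪ ({infty} : Finset α) ∈ level (ext infty H B) 2 := by
  rw [Finset.union_comm]; exact infty_union_mem hni hBH hp hc

lemma pair_B_mem {p q : Finset α} (hpq : p ∪ q ∈ level B 2) :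
    p ∪ q ∈ level (ext infty H B) 2 :=
  level_mono (B_subset_ext hni hBH) 2 hpq

lemma triple_mem {p q : Finset α} (hpq : p ∪ q ∈ level B 2) :
    insert infty (p ∪ q) ∈ level (ext infty H B) 3 := by
  have := mem_level_insert hni hBH hpq.1
  rwa [hpq.2] at this

lemma twopath1 {x y : α} (hx : ({x} : Finset α) ∈ B)
    (hxy : ({x} : Finset α) ∪ {y} ∈ level B 2) :
    IsKPath (ext infty H B) 2 [{infty, x}, {x, y}] := by
  refine ⟨by simp, ?_, ?_⟩
  · intro J hJ
    simp only [List.mem_cons, List.mem_singleton] at hJ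
    rcases hJ with rfl | rfl | h
    · have := infty_union_mem hni hBH hx (by simp)
      rwa [← Finset.insert_eq] at this
    · have := pair_B_mem hni hBH hxy
      rwa [← Finset.insert_eq] at this
    · exact absurd h (by simp)
  · unfold List.Chain'; rw [List.isChain_pair]
    have h3 := triple_mem hni hBH hxy
    have he : ({infty, x} : Finset α) ∪ {x, y} = insert infty ({x} ∪ {y}) := by
      ext a
      simp only [Finset.mem_union, Finset.mem_insert, Finset.mem_singleton]
      tauto
    rw [he]
    exact h3

lemma twopath3 {x y : α} (hy : ({y} : Finset α) ∈ B)
    (hxy : ({x} : Finset α) ∪ {y} ∈ level B 2) :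
    IsKPath (ext infty H B) 2 [{x, y}, {y, infty}] := by
  refine ⟨by simp, ?_, ?_⟩
  · intro J hJ
    simp only [List.mem_cons, List.mem_singleton] at hJ
    rcases hJ with rfl | rfl | h
    · have := pair_B_mem hni hBH hxy
      rwa [← Finset.insert_eq] at this
    · have := union_infty_mem hni hBH hy (by simp)
      rwa [← Finset.insert_eq] at this
    · exact absurd h (by simp)
  · unfold List.Chain'; rw [List.isChain_pair]
    have h3 := triple_mem hni hBH hxy
    have he : ({x, y} : Finset α) ∪ {y, infty} = insert infty ({x} ∪ {y}) := by
      ext a; simp; tauto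
    rw [he]
    exact h3

lemma twopath2 {x y : α} (hx : ({x} : Finset α) ∈ B) (hy : ({y} : Finset α) ∈ B)
    (hxy : ({x} : Finset α) ∪ {y} ∈ level B 2) :
    IsKPath (ext infty H B) 2 [{x, infty}, {infty, y}] := by
  refine ⟨by simp, ?_, ?_⟩
  · intro J hJ
    simp only [List.mem_cons, List.mem_singleton] at hJ
    rcases hJ with rfl | rfl | h
    · have := union_infty_mem hni hBH hx (by simp)
      rwa [← Finset.insert_eq] at this
    · have := infty_union_mem hni hBH hy (by simp)
      rwa [← Finset.insert_eq] at this
    · exact absurd h (by simp)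
  · unfold List.Chain'; rw [List.isChain_pair]
    have h3 := triple_mem hni hBH hxy
    have he : ({x, infty} : Finset α) ∪ {infty, y} = insert infty ({x} ∪ {y}) := by
      ext a; simp; tauto
    rw [he]
    exact h3

include hB0

lemma good_cons_infty {π : List (Finset α)} (hπ : IsKPath B 1 π) :
    Good (ext infty H B) (level (ext infty H B) 1) (({infty} : Finset α) :: π) := by
  have hgood := good_of_bpath hni hBH hπ
  refine ⟨⟨by simp, ?_, ?_⟩, ?_⟩
  · intro J hJ
    rcases List.mem_cons.1 hJ with rfl | hJ
    · exact infty_mem_level_one hni hBH hB0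
    · exact hgood.1.2.1 J hJ
  · unfold List.Chain'; rw [List.isChain_cons]
    refine ⟨fun y hy => ?_, hgood.1.2.2⟩
    have hmem : y ∈ π := List.mem_of_mem_head? hy
    have := hπ.2.1 y hmem
    exact infty_union_mem hni hBH this.1 this.2
  · intro J hJ
    rcases List.mem_cons.1 hJ with rfl | hJ
    · exact infty_mem_level_one hni hBH hB0
    · exact hgood.2 J hJ

lemma good_append_infty {π : List (Finset α)} (hπ : IsKPath B 1 π) :
    Good (ext infty H B) (level (ext infty H B) 1) (π ++ [({infty} : Finset α)]) := by
  have hgood := good_of_bpath hni hBH hπ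
  refine ⟨⟨by simp, ?_, ?_⟩, ?_⟩
  · intro J hJ
    rcases List.mem_append.1 hJ with hJ | hJ
    · exact hgood.1.2.1 J hJ
    · simp only [List.mem_singleton] at hJ
      subst hJ; exact infty_mem_level_one hni hBH hB0
  · unfold List.Chain'; rw [List.isChain_append]
    refine ⟨hgood.1.2.2, List.isChain_singleton _, fun x hx y hy => ?_⟩
    simp only [List.head?_cons, Option.mem_some_iff] at hy
    subst hy
    have hmem : x ∈ π := List.mem_of_mem_getLast? hx
    have := hπ.2.1 x hmem
    exact union_infty_mem hni hBH this.1 this.2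
  · intro J hJ
    rcases List.mem_append.1 hJ with hJ | hJ
    · exact hgood.2 J hJ
    · simp only [List.mem_singleton] at hJ
      subst hJ; exact infty_mem_level_one hni hBH hB0

lemma good_both_infty {π : List (Finset α)} (hπ : IsKPath B 1 π) :
    Good (ext infty H B) (level (ext infty H B) 1)
      (({infty} : Finset α) :: π ++ [({infty} : Finset α)]) := by
  have h1 := good_append_infty hni hBH hB0 hπ
  refine ⟨⟨by simp, ?_, ?_⟩, ?_⟩
  · intro J hJ
    rcases List.mem_cons.1 hJ with rfl | hJ
    · exact infty_mem_level_one hni hBH hB0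
    · exact h1.1.2.1 J hJ
  · refine List.isChain_cons.2 ⟨fun y hy => ?_, h1.1.2.2⟩
    cases π with
    | nil => exact absurd rfl hπ.1
    | cons p t =>
      simp at hy
      subst hy
      have := hπ.2.1 p (by simp)
      exact infty_union_mem hni hBH this.1 this.2
  · intro J hJ
    rcases List.mem_cons.1 hJ with rfl | hJ
    · exact infty_mem_level_one hni hBH hB0
    · exact h1.2 J hJ

end Seg
end BlowupAux
namespace BlowupAux
set_option linter.unusedSectionVars false
set_option maxHeartbeats 1000000

variable {α : Type*} [DecidableEq α] {infty : α} {H B : Set (Finset α)}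

section Seg2

variable (hni : ∀ J ∈ H, infty ∉ J) (hBH : B ⊆ H) (hB0 : ∅ ∈ B)
include hni hBH hB0

lemma good_single_infty :
    Good (ext infty H B) (level (ext infty H B) 1) [({infty} : Finset α)] := by
  refine ⟨⟨by simp, ?_, List.isChain_singleton _⟩, ?_⟩ <;>
  · intro J hJ
    simp only [List.mem_singleton] at hJ
    subst hJ
    exact infty_mem_level_one hni hBH hB0

lemma h1_prepend {π : List (Finset α)} {L : Finset α} (hπ : IsKPath B 1 π)
    (hl : π.getLast? = some L) :
    HomotopicIn (ext infty H B) (level (ext infty H B) 1)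
      [{infty}, L] (({infty} : Finset α) :: π) := by
  revert hπ hl
  induction π with
  | nil => intro hπ _; exact absurd rfl hπ.1
  | cons p t ih =>
    intro hπ hl
    cases t with
    | nil =>
      simp only [List.getLast?_singleton, Option.some_inj] at hl
      subst hl
      exact homotopicIn_refl (good_cons_infty hni hBH hB0 hπ)
    | cons q t' =>
      have htpath : IsKPath B 1 (q :: t') := isKPath_of_cons hπ (by simp)
      have hl' : (q :: t').getLast? = some L := by
        rwa [List.getLast?_cons_cons] at hl
      have ih' := ih htpath hl'
      obtain ⟨hpB, hpH1, x, hx, hpx⟩ := bpath_entry hni hBH hπ (show p ∈ _ by simp)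
      obtain ⟨hqB, hqH1, y, hy, hqy⟩ := bpath_entry hni hBH hπ (show q ∈ _ by simp)
      subst hpx; subst hqy
      have hpq : ({x} : Finset α) ∪ {y} ∈ level B 2 :=
        (List.isChain_cons.1 hπ.2.2).1 {y} (by simp)
      have core : ElemPairCore (ext infty H B)
          [({infty} : Finset α), {y}] [{infty}, {x}, {y}] :=
        Or.inr (Or.inr ⟨infty, y, x, rfl, rfl, twopath1 hni hBH hpB hpq⟩)
      have ehom : ElemHomotopy (ext infty H B)
          (({infty} : Finset α) :: {y} :: t') ({infty} :: {x} :: {y} :: t') :=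
        ⟨[], [{infty}, {y}], [{infty}, {x}, {y}], t', Or.inl core, by simp, by simp⟩
      exact homotopicIn_trans ih'
        ⟨good_cons_infty hni hBH hB0 htpath,
          Relation.ReflTransGen.single ⟨ehom, good_cons_infty hni hBH hB0 hπ⟩⟩

lemma h1'_append {π : List (Finset α)} {J0 : Finset α} (hπ : IsKPath B 1 π)
    (hh : π.head? = some J0) :
    HomotopicIn (ext infty H B) (level (ext infty H B) 1)
      [J0, {infty}] (π ++ [({infty} : Finset α)]) := by
  revert hπ
  revert J0
  induction π with
  | nil => intro J0 _ hπ; exact absurd rfl hπ.1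
  | cons p t ih =>
    intro J0 hh hπ
    simp only [List.head?_cons, Option.some_inj] at hh
    subst hh
    cases t with
    | nil => exact homotopicIn_refl (good_append_infty hni hBH hB0 hπ)
    | cons q t' =>
      have htpath : IsKPath B 1 (q :: t') := isKPath_of_cons hπ (by simp)
      have ih' := ih rfl htpath
      obtain ⟨hpB, hpH1, x, hx, hpx⟩ := bpath_entry hni hBH hπ (show p ∈ _ by simp)
      obtain ⟨hqB, hqH1, y, hy, hqy⟩ := bpath_entry hni hBH hπ (show q ∈ _ by simp)
      subst hpx; subst hqy
      have hpq : ({x} : Finset α) ∪ {y} ∈ level B 2 :=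
        (List.isChain_cons.1 hπ.2.2).1 {y} (by simp)
      have core : ElemPairCore (ext infty H B)
          [({x} : Finset α), {infty}] [{x}, {y}, {infty}] :=
        Or.inr (Or.inr ⟨x, infty, y, rfl, rfl, twopath3 hni hBH hqB hpq⟩)
      have hp1 : IsKPath B 1 [({x} : Finset α)] := by
        refine ⟨by simp, ?_, List.isChain_singleton _⟩
        intro J hJ
        simp only [List.mem_singleton] at hJ
        subst hJ
        exact hπ.2.1 _ (by simp)
      have hp2 : IsKPath B 1 [({x} : Finset α), {y}] := by
        refine ⟨by simp, ?_, List.isChain_pair.2 hpq⟩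
        intro J hJ
        simp only [List.mem_cons, List.mem_singleton] at hJ
        rcases hJ with rfl | rfl | h
        · exact hπ.2.1 _ (by simp)
        · exact hπ.2.1 _ (by simp)
        · exact absurd h (by simp)
      have ehom : ElemHomotopy (ext infty H B)
          [({x} : Finset α), {infty}] [{x}, {y}, {infty}] :=
        ⟨[], [{x}, {infty}], [{x}, {y}, {infty}], [], Or.inl core, by simp, by simp⟩
      have step1 : HomotopicIn (ext infty H B) (level (ext infty H B) 1)
          [({x} : Finset α), {infty}] [{x}, {y}, {infty}] :=
        ⟨good_append_infty hni hBH hB0 hp1,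
          Relation.ReflTransGen.single ⟨ehom, good_append_infty hni hBH hB0 hp2⟩⟩
      have hw : Good (ext infty H B) (level (ext infty H B) 1)
          ([({x} : Finset α)] ++ [({y} : Finset α), {infty}] ++ []) :=
        good_append_infty hni hBH hB0 hp2
      have h2 := homotopicIn_cong ih' hw
      simp only [List.append_nil, List.cons_append, List.nil_append] at h2
      exact homotopicIn_trans step1 h2

lemma collapse_loop {π : List (Finset α)} (hπ : IsKPath B 1 π) :
    HomotopicIn (ext infty H B) (level (ext infty H B) 1)
      (({infty} : Finset α) :: π ++ [({infty} : Finset α)]) [{infty}] := by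
  revert hπ
  induction π with
  | nil => intro hπ; exact absurd rfl hπ.1
  | cons p t ih =>
    intro hπ
    obtain ⟨hpB, hpH1, x, hx, hpx⟩ := bpath_entry hni hBH hπ (show p ∈ _ by simp)
    subst hpx
    cases t with
    | nil =>
      have core : ElemPairCore (ext infty H B)
          [({infty} : Finset α), {x}, {infty}] [{infty}] :=
        Or.inr (Or.inl ⟨infty, x, rfl, rfl⟩)
      have ehom : ElemHomotopy (ext infty H B)
          (({infty} : Finset α) :: [({x} : Finset α)] ++ [({infty} : Finset α)])
          [{infty}] :=
        ⟨[], [{infty}, {x}, {infty}], [{infty}], [], Or.inl core, by simp, by simp⟩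
      exact ⟨good_both_infty hni hBH hB0 hπ,
        Relation.ReflTransGen.single ⟨ehom, good_single_infty hni hBH hB0⟩⟩
    | cons q t' =>
      have htpath : IsKPath B 1 (q :: t') := isKPath_of_cons hπ (by simp)
      obtain ⟨hqB, hqH1, y, hy, hqy⟩ := bpath_entry hni hBH hπ (show q ∈ _ by simp)
      subst hqy
      have hpq : ({x} : Finset α) ∪ {y} ∈ level B 2 :=
        (List.isChain_cons.1 hπ.2.2).1 {y} (by simp)
      have gq := good_both_infty hni hBH hB0 htpath
      -- γ1 = {infty} :: {x} :: {infty} :: ((q::t') ++ [{infty}])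
      have goodγ1 : Good (ext infty H B) (level (ext infty H B) 1)
          (({infty} : Finset α) :: {x} :: {infty} :: (({y} : Finset α) :: t'
            ++ [({infty} : Finset α)])) := by
        refine ⟨⟨by simp, ?_, ?_⟩, ?_⟩
        · intro J hJ
          rcases List.mem_cons.1 hJ with rfl | hJ
          · exact infty_mem_level_one hni hBH hB0
          rcases List.mem_cons.1 hJ with rfl | hJ
          · exact level_mono Set.subset_union_left 1 hpH1
          rcases List.mem_cons.1 hJ with rfl | hJ
          · exact infty_mem_level_one hni hBH hB0
          · refine gq.1.2.1 J ?_
            simp only [List.cons_append, List.mem_cons, List.mem_append,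
              List.mem_singleton] at hJ ⊢
            tauto
        · refine List.isChain_cons.2 ⟨?_, List.isChain_cons.2 ⟨?_, ?_⟩⟩
          · intro z hz
            simp only [List.head?_cons, Option.mem_some_iff] at hz
            subst hz
            exact infty_union_mem hni hBH hpB (by simp)
          · intro z hz
            simp only [List.head?_cons, Option.mem_some_iff] at hz
            subst hz
            exact union_infty_mem hni hBH hpB (by simp)
          · exact gq.1.2.2
        · intro J hJ
          rcases List.mem_cons.1 hJ with rfl | hJ
          · exact infty_mem_level_one hni hBH hB0
          rcases List.mem_cons.1 hJ with rfl | hJ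
          · exact level_mono Set.subset_union_left 1 hpH1
          · refine gq.2 J ?_
            simp only [List.cons_append, List.mem_cons, List.mem_append,
              List.mem_singleton] at hJ ⊢
            tauto
      have core1 : ElemPairCore (ext infty H B)
          [({x} : Finset α), {y}] [{x}, {infty}, {y}] :=
        Or.inr (Or.inr ⟨x, y, infty, rfl, rfl, twopath2 hni hBH hpB hqB hpq⟩)
      have ehom1 : ElemHomotopy (ext infty H B)
          (({infty} : Finset α) :: (({x} : Finset α) :: {y} :: t')
            ++ [({infty} : Finset α)])
          (({infty} : Finset α) :: {x} :: {infty} :: (({y} : Finset α) :: t'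
            ++ [({infty} : Finset α)])) :=
        ⟨[{infty}], [{x}, {y}], [{x}, {infty}, {y}], t' ++ [{infty}],
          Or.inl core1, by simp, by simp⟩
      have core2 : ElemPairCore (ext infty H B)
          [({infty} : Finset α), {x}, {infty}] [{infty}] :=
        Or.inr (Or.inl ⟨infty, x, rfl, rfl⟩)
      have ehom2 : ElemHomotopy (ext infty H B)
          (({infty} : Finset α) :: {x} :: {infty} :: (({y} : Finset α) :: t'
            ++ [({infty} : Finset α)]))
          (({infty} : Finset α) :: (({y} : Finset α) :: t')
            ++ [({infty} : Finset α)]) :=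
        ⟨[], [{infty}, {x}, {infty}], [{infty}], ({y} : Finset α) :: t' ++ [{infty}],
          Or.inl core2, by simp, by simp⟩
      refine homotopicIn_trans ⟨good_both_infty hni hBH hB0 hπ,
        Relation.ReflTransGen.single ⟨ehom1, goodγ1⟩⟩ ?_
      refine homotopicIn_trans ⟨goodγ1, Relation.ReflTransGen.single ⟨ehom2, gq⟩⟩ ?_
      exact ih htpath

end Seg2
end BlowupAux
namespace BlowupAux
set_option linter.unusedSectionVars false
set_option maxHeartbeats 1000000

variable {α : Type*} [DecidableEq α] {infty : α} {H B : Set (Finset α)}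

lemma cons_decomp {β : Type*} {l : List β} (h : l ≠ []) :
    ∃ δ a, l = δ ++ [a] := ⟨l.dropLast, l.getLast h, (List.dropLast_append_getLast h).symm⟩

lemma interior_decomp {γ : List (Finset α)} (h : ({infty} : Finset α) ∈ γ.tail.dropLast) :
    ∃ δ a b ρ, γ = δ ++ a :: ({infty} : Finset α) :: b :: ρ := by
  cases γ with
  | nil => simp at h
  | cons x t =>
    simp only [List.tail_cons] at h
    have ht : t ≠ [] := by rintro rfl; simp at h
    obtain ⟨u, v, huv⟩ := List.append_of_mem h
    have ht2 : t = t.dropLast ++ [t.getLast ht] := (List.dropLast_append_getLast ht).symm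
    have hγ2 : x :: t = (x :: u) ++ (({infty} : Finset α) :: (v ++ [t.getLast ht])) := by
      conv_lhs => rw [ht2]
      rw [huv]
      simp
    cases v with
    | nil =>
      refine ⟨(x :: u).dropLast, (x :: u).getLast (by simp), t.getLast ht, [], ?_⟩
      rw [hγ2]
      conv_lhs => rw [← List.dropLast_append_getLast (show x :: u ≠ [] by simp)]
      simp
    | cons b v' =>
      refine ⟨(x :: u).dropLast, (x :: u).getLast (by simp), b, v' ++ [t.getLast ht], ?_⟩
      rw [hγ2]
      conv_lhs => rw [← List.dropLast_append_getLast (show x :: u ≠ [] by simp)]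
      simp

lemma chain'_of_infix {β : Type*} {R : β → β → Prop} {l l₁ : List β}
    (h : l.Chain' R) (hinf : l₁ <:+: l) : l₁.Chain' R :=
  h.infix hinf

section Remove

variable (hni : ∀ J ∈ H, infty ∉ J) (hBH : B ⊆ H) (hB0 : ∅ ∈ B)
  (hBconn : KConnectedIn B 1 (B ∩ level H 1))
include hni hBH hB0 hBconn

lemma remove_step {γ δ ρ : List (Finset α)} {a b : Finset α}
    (hγ : Good (ext infty H B) (level (ext infty H B) 1) γ)
    (hdec : γ = δ ++ a :: ({infty} : Finset α) :: b :: ρ) :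
    ∃ γ', HomotopicIn (ext infty H B) (level (ext infty H B) 1) γ γ' ∧
      γ'.count ({infty} : Finset α) < γ.count ({infty} : Finset α) := by
  subst hdec
  have ha1 : a ∈ level (ext infty H B) 1 := hγ.1.2.1 a (by simp)
  have hb1 : b ∈ level (ext infty H B) 1 := hγ.1.2.1 b (by simp)
  have hedge1 : a ∪ ({infty} : Finset α) ∈ level (ext infty H B) 2 := by
    have hinf := chain'_of_infix hγ.1.2.2 (⟨δ, b :: ρ, by simp⟩ :
      [a, ({infty} : Finset α)] <:+: _)
    have h' := List.isChain_pair.1 hinf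
    exact h'
  have hedge2 : ({infty} : Finset α) ∪ b ∈ level (ext infty H B) 2 := by
    have hinf := chain'_of_infix hγ.1.2.2 (⟨δ ++ [a], ρ, by simp⟩ :
      [({infty} : Finset α), b] <:+: _)
    have h' := List.isChain_pair.1 hinf
    exact h'
  obtain ⟨haB, haH1, x, hx, hax⟩ := neighbor_of_infty' hni hBH ha1 hedge1
  obtain ⟨hbB, hbH1, y, hy, hby⟩ := neighbor_of_infty hni hBH hb1 hedge2
  obtain ⟨π, hπpath, ⟨hπh, hπl⟩, hπsup⟩ := hBconn a ⟨haB, haH1⟩ b ⟨hbB, hbH1⟩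
  have hπnoinf : ({infty} : Finset α) ∉ π := by
    intro hmem
    obtain ⟨-, -, z, hz, hz2⟩ := bpath_entry hni hBH hπpath hmem
    exact hz (Finset.singleton_injective hz2).symm
  -- step 1: expand [{infty}, b] to {infty} :: π
  have step1 := h1_prepend hni hBH hB0 hπpath hπl
  have hw : Good (ext infty H B) (level (ext infty H B) 1)
      ((δ ++ [a]) ++ [({infty} : Finset α), b] ++ ρ) := by
    have := hγ
    simpa using this
  have h2 := homotopicIn_cong step1 hw
  simp only [List.append_assoc, List.cons_append, List.nil_append,
    List.singleton_append] at h2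
  -- now collapse [a, {infty}, a]
  have hπcons : π = a :: π.tail := by
    cases π with
    | nil => simp at hπh
    | cons z t =>
      simp only [List.head?_cons, Option.some_inj] at hπh
      rw [hπh]
      rfl
  have core : ElemPairCore (ext infty H B)
      [a, ({infty} : Finset α), a] [a] := by
    subst hax
    exact Or.inr (Or.inl ⟨x, infty, rfl, rfl⟩)
  have ehom : ElemHomotopy (ext infty H B)
      (δ ++ a :: ({infty} : Finset α) :: (π ++ ρ))
      (δ ++ π ++ ρ) := by
    refine ⟨δ, [a, ({infty} : Finset α), a], [a], π.tail ++ ρ, Or.inl core, ?_, ?_⟩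
    · conv_lhs => rw [hπcons]
      simp
    · conv_lhs => rw [hπcons]
      simp
  have goodfin : Good (ext infty H B) (level (ext infty H B) 1) (δ ++ π ++ ρ) := by
    refine good_glue (σ := [a, ({infty} : Finset α), b]) (by simpa using hγ)
      (good_of_bpath hni hBH hπpath) ?_ ?_
    · rw [hπh]; simp
    · rw [hπl]; simp
  refine ⟨δ ++ π ++ ρ, homotopicIn_trans h2
    ⟨(homotopicIn_symm h2).1, Relation.ReflTransGen.single ⟨ehom, goodfin⟩⟩, ?_⟩
  have hπ0 : π.count ({infty} : Finset α) = 0 := List.count_eq_zero.2 hπnoinf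
  have hane : a ≠ ({infty} : Finset α) := by
    subst hax; simp [Finset.singleton_inj]; exact fun h => hx h
  have hbne : b ≠ ({infty} : Finset α) := by
    subst hby; simp [Finset.singleton_inj]; exact fun h => hy h
  simp [List.count_append, List.count_cons, hπ0, hane, hbne]

lemma normalize {γ : List (Finset α)}
    (hγ : Good (ext infty H B) (level (ext infty H B) 1) γ) :
    ∃ γ', HomotopicIn (ext infty H B) (level (ext infty H B) 1) γ γ' ∧
      ({infty} : Finset α) ∉ γ'.tail.dropLast := by
  generalize hn : γ.count ({infty} : Finset α) = n
  induction n using Nat.strong_induction_on generalizing γ with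
  | _ n ih =>
    by_cases hmem : ({infty} : Finset α) ∈ γ.tail.dropLast
    · obtain ⟨δ, a, b, ρ, hdec⟩ := interior_decomp hmem
      obtain ⟨γ', hhom, hlt⟩ := remove_step hni hBH hB0 hBconn hγ hdec
      obtain ⟨γ'', h2, h3⟩ := ih (γ'.count ({infty} : Finset α)) (hn ▸ hlt)
        (good_of_rtg hγ hhom.2) rfl
      exact ⟨γ'', homotopicIn_trans hhom h2, h3⟩
    · exact ⟨γ, homotopicIn_refl hγ, hmem⟩

end Remove
end BlowupAux
namespace BlowupAux
set_option linter.unusedSectionVars false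
set_option maxHeartbeats 2000000

variable {α : Type*} [DecidableEq α] {infty : α} {H B : Set (Finset α)}

lemma getLast?_cons_of_ne_nil {β : Type*} {x : β} {t : List β} (h : t ≠ []) :
    (x :: t).getLast? = t.getLast? := by
  cases t with
  | nil => exact absurd rfl h
  | cons a s => exact List.getLast?_cons_cons

lemma mem_tail_shape {β : Type*} {rest : List β} {L x : β} (hrest : rest ≠ [])
    (hL : rest.getLast? = some L) (hmem : x ∈ rest) :
    x ∈ rest.dropLast ∨ x = L := by
  have hgl : rest.getLast hrest = L := by
    rw [List.getLast?_eq_getLast hrest] at hL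
    exact Option.some_injective _ hL
  have hdec : rest = rest.dropLast ++ [L] := by
    conv_lhs => rw [← List.dropLast_append_getLast hrest]
    rw [hgl]
  rw [hdec] at hmem
  rcases List.mem_append.1 hmem with h | h
  · exact Or.inl h
  · simp only [List.mem_singleton] at h
    exact Or.inr h

lemma isKPath_prefix {Hh : Set (Finset α)} {k : ℕ} {ω ρ : List (Finset α)}
    (h : IsKPath Hh k (ω ++ ρ)) (hω : ω ≠ []) : IsKPath Hh k ω :=
  ⟨hω, fun J hJ => h.2.1 J (by simp [hJ]), h.2.2.prefix (List.prefix_append ω ρ)⟩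

lemma eq_dropLast_append_of_getLast? {β : Type*} {l : List β} {b : β}
    (h : l.getLast? = some b) : l = l.dropLast ++ [b] := by
  have hne : l ≠ [] := by rintro rfl; simp at h
  have hgl : l.getLast hne = b := by
    rw [List.getLast?_eq_getLast hne] at h
    exact Option.some_injective _ h
  conv_lhs => rw [← List.dropLast_append_getLast hne]
  rw [hgl]

lemma mem_of_getLast?_eq {β : Type*} {l : List β} {b : β}
    (h : l.getLast? = some b) : b ∈ l :=
  List.mem_of_mem_getLast? (by rw [h]; rfl)

section Main

variable (hni : ∀ J ∈ H, infty ∉ J) (hBH : B ⊆ H) (hB0 : ∅ ∈ B)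
  (hBconn : KConnectedIn B 1 (B ∩ level H 1)) (hsc : SimplyConnected H)
include hni hBH hB0 hBconn hsc

/-- Loop reduction: a normalized loop at `{infty}` is null-homotopic. -/
lemma reduce_loop {γ : List (Finset α)}
    (hγ : Good (ext infty H B) (level (ext infty H B) 1) γ)
    (hn : ({infty} : Finset α) ∉ γ.tail.dropLast)
    (hhead : γ.head? = some ({infty} : Finset α))
    (hlast : γ.getLast? = some ({infty} : Finset α)) :
    HomotopicIn (ext infty H B) (level (ext infty H B) 1) γ [{infty}] := by
  cases γ with
  | nil => exact absurd rfl hγ.1.1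
  | cons c0 rest =>
  simp only [List.head?_cons, Option.some_inj] at hhead
  subst hhead
  cases rest with
  | nil => exact homotopicIn_refl (good_single_infty hni hBH hB0)
  | cons r t =>
  have hrne : r :: t ≠ [] := by simp
  have hlast2 : (r :: t).getLast? = some ({infty} : Finset α) := by
    rwa [getLast?_cons_of_ne_nil hrne] at hlast
  have hgl : (r :: t).getLast hrne = ({infty} : Finset α) := by
    rw [List.getLast?_eq_getLast hrne] at hlast2
    exact Option.some_injective _ hlast2
  set ξ : List (Finset α) := (r :: t).dropLast with hξ
  have hdecr : r :: t = ξ ++ [({infty} : Finset α)] := by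
    conv_lhs => rw [← List.dropLast_append_getLast hrne]
    rw [hgl]
  have hnξ : ({infty} : Finset α) ∉ ξ := by simpa using hn
  cases hξc : ξ with
  | nil =>
    rw [hξc] at hdecr
    simp only [List.nil_append] at hdecr
    rw [hdecr] at hγ
    have hch := hγ.1.2.2
    have h2 := (List.isChain_cons.1 hch).1 ({infty} : Finset α) (by simp)
    have h3 := h2.2
    simp at h3
  | cons a ξt =>
  rw [hξc] at hdecr hnξ
  have hdecγ : ({infty} : Finset α) :: r :: t =
      ({infty} : Finset α) :: (a :: ξt) ++ [({infty} : Finset α)] := by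
    rw [hdecr]; rfl
  have hγ2 : Good (ext infty H B) (level (ext infty H B) 1)
      (({infty} : Finset α) :: (a :: ξt) ++ [({infty} : Finset α)]) := by
    rw [← hdecγ]; exact hγ
  -- ξ = a :: ξt is a 1-path in H
  have hξx : IsKPath (ext infty H B) 1 (a :: ξt) := by
    refine ⟨by simp, fun J hJ => hγ2.1.2.1 J ?_, ?_⟩
    · simp only [List.mem_cons] at hJ
      simp only [List.cons_append, List.mem_cons, List.mem_append, List.mem_singleton]
      tauto
    refine hγ2.1.2.2.infix ⟨[({infty} : Finset α)], [({infty} : Finset α)], by simp⟩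
  have hξH : IsKPath H 1 (a :: ξt) := noInf_path hni hBH hξx hnξ
  -- endpoints of ξ
  have hedge1 : ({infty} : Finset α) ∪ a ∈ level (ext infty H B) 2 := by
    have := (List.isChain_cons.1 hγ2.1.2.2).1 a (by cases ξt <;> simp)
    exact this
  have hbne : (a :: ξt) ≠ [] := by simp
  set b := (a :: ξt).getLast hbne with hb
  have hblmem : b ∈ a :: ξt := List.getLast_mem hbne
  have hedge2 : b ∪ ({infty} : Finset α) ∈ level (ext infty H B) 2 := by
    have hch := hγ2.1.2.2
    rw [show ({infty} : Finset α) :: (a :: ξt) ++ [({infty} : Finset α)] =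
      (({infty} : Finset α) :: (a :: ξt)) ++ [({infty} : Finset α)] from rfl] at hch
    have := (List.isChain_append.1 hch).2.2 b ?_ ({infty} : Finset α) (by simp)
    · exact this
    · rw [getLast?_cons_of_ne_nil hbne]
      exact List.getLast?_eq_getLast hbne
  obtain ⟨haB, haH1, xa, hxa, haxa⟩ := neighbor_of_infty hni hBH
    (hξx.2.1 a (by simp)) hedge1
  obtain ⟨hbB, hbH1, xb, hxb, hbxb⟩ := neighbor_of_infty' hni hBH
    (hξx.2.1 b hblmem) hedge2
  obtain ⟨π, hπpath, ⟨hπh, hπl⟩, hπsup⟩ := hBconn a ⟨haB, haH1⟩ b ⟨hbB, hbH1⟩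
  have happ := hsc.2 (a :: ξt) π hξH (bpath_isKPath hni hBH hπpath)
    hξH.2.1 (bpath_isKPath hni hBH hπpath).2.1
    (by rw [hπh]; simp)
    (by rw [hπl, List.getLast?_eq_getLast hbne])
  have hsub : H ⊆ ext infty H B := Set.subset_union_left
  have hlift : HomotopicIn (ext infty H B) (level (ext infty H B) 1) (a :: ξt) π :=
    homotopicIn_mono hsub (level_mono hsub 1) happ
  have hw : Good (ext infty H B) (level (ext infty H B) 1)
      ([({infty} : Finset α)] ++ (a :: ξt) ++ [({infty} : Finset α)]) := by
    simpa using hγ2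
  have hA := homotopicIn_cong hlift hw
  simp only [List.append_assoc, List.cons_append, List.nil_append,
    List.singleton_append] at hA
  rw [hdecγ]
  refine homotopicIn_trans ?_ (collapse_loop hni hBH hB0 hπpath)
  simpa using hA

/-- Comparison of two normalized paths with common endpoints. -/
lemma main_normalized {γ γ' : List (Finset α)}
    (hγ : Good (ext infty H B) (level (ext infty H B) 1) γ)
    (hγ' : Good (ext infty H B) (level (ext infty H B) 1) γ')
    (hn : ({infty} : Finset α) ∉ γ.tail.dropLast)
    (hn' : ({infty} : Finset α) ∉ γ'.tail.dropLast)
    (hh : γ.head? = γ'.head?) (hl : γ.getLast? = γ'.getLast?) :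
    HomotopicIn (ext infty H B) (level (ext infty H B) 1) γ γ' := by
  have hsub : H ⊆ ext infty H B := Set.subset_union_left
  obtain ⟨c0, rest, rfl⟩ : ∃ c0 rest, γ = c0 :: rest := by
    cases γ with
    | nil => exact absurd rfl hγ.1.1
    | cons x t => exact ⟨x, t, rfl⟩
  obtain ⟨c0', rest', rfl⟩ : ∃ c0 rest, γ' = c0 :: rest := by
    cases γ' with
    | nil => exact absurd rfl hγ'.1.1
    | cons x t => exact ⟨x, t, rfl⟩
  simp only [List.head?_cons, Option.some_inj] at hh
  subst hh
  obtain ⟨L, hLs⟩ : ∃ L, (c0 :: rest).getLast? = some L :=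
    ⟨_, List.getLast?_eq_getLast (by simp)⟩
  have hLs' : (c0 :: rest').getLast? = some L := by rw [← hl]; exact hLs
  by_cases hc0 : c0 = ({infty} : Finset α)
  · by_cases hL : L = ({infty} : Finset α)
    · -- Case D : both endpoints {infty}
      subst hc0; subst hL
      exact homotopicIn_trans
        (reduce_loop hni hBH hB0 hBconn hsc hγ hn rfl hLs)
        (homotopicIn_symm (reduce_loop hni hBH hB0 hBconn hsc hγ' hn' rfl hLs'))
    · -- Case B : head {infty}, last not
      subst hc0
      -- γ = {infty} :: a :: τ
      cases rest with
      | nil =>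
        exfalso; apply hL
        simp only [List.getLast?_singleton, Option.some_inj] at hLs
        exact hLs.symm
      | cons a τ =>
      cases rest' with
      | nil =>
        exfalso; apply hL
        simp only [List.getLast?_singleton, Option.some_inj] at hLs'
        exact hLs'.symm
      | cons a' τ' =>
      have hτne : a :: τ ≠ [] := by simp
      have hτne' : a' :: τ' ≠ [] := by simp
      have hσL : (a :: τ).getLast? = some L := by
        rwa [getLast?_cons_of_ne_nil hτne] at hLs
      have hσL' : (a' :: τ').getLast? = some L := by
        rwa [getLast?_cons_of_ne_nil hτne'] at hLs'
      have hnoinf : ({infty} : Finset α) ∉ a :: τ := by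
        intro hmem
        rcases mem_tail_shape hτne hσL hmem with h | h
        · exact hn (by simpa using h)
        · exact hL h.symm
      have hnoinf' : ({infty} : Finset α) ∉ a' :: τ' := by
        intro hmem
        rcases mem_tail_shape hτne' hσL' hmem with h | h
        · exact hn' (by simpa using h)
        · exact hL h.symm
      have hσx : IsKPath (ext infty H B) 1 (a :: τ) := isKPath_of_cons hγ.1 hτne
      have hσx' : IsKPath (ext infty H B) 1 (a' :: τ') := isKPath_of_cons hγ'.1 hτne'
      have hσH : IsKPath H 1 (a :: τ) := noInf_path hni hBH hσx hnoinf
      have hσH' : IsKPath H 1 (a' :: τ') := noInf_path hni hBH hσx' hnoinf'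
      have hedge : ({infty} : Finset α) ∪ a ∈ level (ext infty H B) 2 :=
        (List.isChain_cons.1 hγ.1.2.2).1 a (by simp)
      have hedge' : ({infty} : Finset α) ∪ a' ∈ level (ext infty H B) 2 :=
        (List.isChain_cons.1 hγ'.1.2.2).1 a' (by simp)
      obtain ⟨haB, haH1, -⟩ := neighbor_of_infty hni hBH (hσx.2.1 a (by simp)) hedge
      obtain ⟨haB', haH1', -⟩ := neighbor_of_infty hni hBH (hσx'.2.1 a' (by simp)) hedge'
      obtain ⟨π, hπpath, ⟨hπh, hπl⟩, hπsup⟩ := hBconn a ⟨haB, haH1⟩ a' ⟨haB', haH1'⟩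
      -- expand γ' : [{infty}, a'] ~ {infty} :: π
      have h1 := h1_prepend hni hBH hB0 hπpath hπl
      have hw' : Good (ext infty H B) (level (ext infty H B) 1)
          ([] ++ [({infty} : Finset α), a'] ++ τ') := by simpa using hγ'
      have hA' := homotopicIn_cong h1 hw'
      simp only [List.append_assoc, List.cons_append, List.nil_append,
        List.singleton_append] at hA'
      -- combined path π ++ τ'
      have hcomb : IsKPath H 1 (π ++ τ') := by
        cases τ' with
        | nil => simpa using bpath_isKPath hni hBH hπpath
        | cons y τ'' =>
          refine isKPath_append (bpath_isKPath hni hBH hπpath)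
            (isKPath_of_cons hσH' (by simp)) ?_
          intro u hu v hv
          rw [hπl, Option.mem_some_iff] at hu
          subst hu
          exact (List.isChain_cons.1 hσH'.2.2).1 v hv
      have hcombh : (π ++ τ').head? = some a := by
        rw [List.head?_append, hπh]; rfl
      have hcombl : (π ++ τ').getLast? = some L := by
        rw [List.getLast?_append]
        cases τ' with
        | nil =>
          simp only [List.getLast?_singleton, Option.some_inj] at hσL'
          simp only [List.getLast?_nil, Option.none_or]
          rw [hπl, hσL']
        | cons y τ'' =>
          have : (y :: τ'').getLast? = some L := by
            rwa [getLast?_cons_of_ne_nil (by simp)] at hσL'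
          rw [this]; rfl
      have happ := hsc.2 (a :: τ) (π ++ τ') hσH hcomb hσH.2.1 hcomb.2.1
        (by rw [hcombh]; rfl) (by rw [hσL, hcombl])
      have hlift : HomotopicIn (ext infty H B) (level (ext infty H B) 1)
          (a :: τ) (π ++ τ') := homotopicIn_mono hsub (level_mono hsub 1) happ
      have hw : Good (ext infty H B) (level (ext infty H B) 1)
          ([({infty} : Finset α)] ++ (a :: τ) ++ []) := by simpa using hγ
      have hA := homotopicIn_cong hlift hw
      simp only [List.append_assoc, List.cons_append, List.nil_append,
        List.singleton_append, List.append_nil] at hA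
      exact homotopicIn_trans hA (homotopicIn_symm hA')
  · by_cases hL : L = ({infty} : Finset α)
    · -- Case C : last {infty}, head not
      cases rest with
      | nil =>
        exfalso; apply hc0
        simp only [List.getLast?_singleton, Option.some_inj] at hLs
        exact hLs.trans hL
      | cons r t =>
      cases rest' with
      | nil =>
        exfalso; apply hc0
        simp only [List.getLast?_singleton, Option.some_inj] at hLs'
        exact hLs'.trans hL
      | cons r' t' =>
      have hrne : r :: t ≠ [] := by simp
      have hrne' : r' :: t' ≠ [] := by simp
      -- γ = ω ++ [{infty}], ω = c0 :: (r::t).dropLast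
      have hgl : (r :: t).getLast hrne = ({infty} : Finset α) := by
        have h1 : (r :: t).getLast? = some L := by
          rwa [getLast?_cons_of_ne_nil hrne] at hLs
        rw [List.getLast?_eq_getLast hrne] at h1
        rw [Option.some_inj.1 h1, hL]
      have hgl' : (r' :: t').getLast hrne' = ({infty} : Finset α) := by
        have h1 : (r' :: t').getLast? = some L := by
          rwa [getLast?_cons_of_ne_nil hrne'] at hLs'
        rw [List.getLast?_eq_getLast hrne'] at h1
        rw [Option.some_inj.1 h1, hL]
      obtain ⟨ω, hω⟩ : ∃ w : List (Finset α), w = c0 :: (r :: t).dropLast := ⟨_, rfl⟩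
      obtain ⟨ω', hω'⟩ : ∃ w : List (Finset α), w = c0 :: (r' :: t').dropLast := ⟨_, rfl⟩
      have hdecγ : c0 :: r :: t = ω ++ [({infty} : Finset α)] := by
        rw [hω]
        have : r :: t = (r :: t).dropLast ++ [({infty} : Finset α)] := by
          conv_lhs => rw [← List.dropLast_append_getLast hrne]
          rw [hgl]
        conv_lhs => rw [this]
        rw [List.cons_append]
      have hdecγ' : c0 :: r' :: t' = ω' ++ [({infty} : Finset α)] := by
        rw [hω']
        have : r' :: t' = (r' :: t').dropLast ++ [({infty} : Finset α)] := by
          conv_lhs => rw [← List.dropLast_append_getLast hrne']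
          rw [hgl']
        conv_lhs => rw [this]
        rw [List.cons_append]
      have hωne : ω ≠ [] := by simp [hω]
      have hωne' : ω' ≠ [] := by simp [hω']
      have hnoinfω : ({infty} : Finset α) ∉ ω := by
        intro hmem
        rw [hω] at hmem
        rcases List.mem_cons.1 hmem with h | h
        · exact hc0 h.symm
        · exact hn (by simpa using h)
      have hnoinfω' : ({infty} : Finset α) ∉ ω' := by
        intro hmem
        rw [hω'] at hmem
        rcases List.mem_cons.1 hmem with h | h
        · exact hc0 h.symm
        · exact hn' (by simpa using h)
      have hγd : Good (ext infty H B) (level (ext infty H B) 1)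
          (ω ++ [({infty} : Finset α)]) := by rw [← hdecγ]; exact hγ
      have hγd' : Good (ext infty H B) (level (ext infty H B) 1)
          (ω' ++ [({infty} : Finset α)]) := by rw [← hdecγ']; exact hγ'
      have hωx : IsKPath (ext infty H B) 1 ω := isKPath_prefix hγd.1 hωne
      have hωx' : IsKPath (ext infty H B) 1 ω' := isKPath_prefix hγd'.1 hωne'
      have hωH : IsKPath H 1 ω := noInf_path hni hBH hωx hnoinfω
      have hωH' : IsKPath H 1 ω' := noInf_path hni hBH hωx' hnoinfω'
      obtain ⟨b, hωl⟩ : ∃ b, ω.getLast? = some b := ⟨_, List.getLast?_eq_getLast hωne⟩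
      obtain ⟨b', hωl'⟩ : ∃ b, ω'.getLast? = some b := ⟨_, List.getLast?_eq_getLast hωne'⟩
      have hedge : b ∪ ({infty} : Finset α) ∈ level (ext infty H B) 2 := by
        have := (List.isChain_append.1 hγd.1.2.2).2.2 b hωl ({infty} : Finset α)
          (by simp)
        exact this
      have hedge' : b' ∪ ({infty} : Finset α) ∈ level (ext infty H B) 2 := by
        have := (List.isChain_append.1 hγd'.1.2.2).2.2 b' hωl' ({infty} : Finset α)
          (by simp)
        exact this
      obtain ⟨hbB, hbH1, -⟩ := neighbor_of_infty' hni hBH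
        (hωx.2.1 b (mem_of_getLast?_eq hωl)) hedge
      obtain ⟨hbB', hbH1', -⟩ := neighbor_of_infty' hni hBH
        (hωx'.2.1 b' (mem_of_getLast?_eq hωl')) hedge'
      obtain ⟨π, hπpath, ⟨hπh, hπl⟩, hπsup⟩ := hBconn b' ⟨hbB', hbH1'⟩ b ⟨hbB, hbH1⟩
      -- expand γ' : [b', {infty}] ~ π ++ [{infty}]
      have h1 := h1'_append hni hBH hB0 hπpath hπh
      have hdecω' : ω' = ω'.dropLast ++ [b'] :=
        eq_dropLast_append_of_getLast? hωl'
      have hw' : Good (ext infty H B) (level (ext infty H B) 1)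
          (ω'.dropLast ++ [b', ({infty} : Finset α)] ++ []) := by
        have t1 := hγd'
        rw [hdecω'] at t1
        simpa using t1
      have hA' := homotopicIn_cong h1 hw'
      simp only [List.append_assoc, List.cons_append, List.nil_append,
        List.singleton_append, List.append_nil] at hA'
      -- combined path ω'.dropLast ++ π
      have hsplit : IsKPath H 1 (ω'.dropLast ++ [b']) := by
        rw [← hdecω']; exact hωH'
      have hcomb : IsKPath H 1 (ω'.dropLast ++ π) := by
        by_cases hdl : ω'.dropLast = []
        · rw [hdl]; simpa using bpath_isKPath hni hBH hπpath
        · refine isKPath_append (isKPath_prefix hsplit hdl)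
            (bpath_isKPath hni hBH hπpath) ?_
          intro u hu v hv
          rw [hπh, Option.mem_some_iff] at hv
          subst hv
          have hch := hωH'.2.2
          rw [hdecω'] at hch
          exact (List.isChain_append.1 hch).2.2 u hu b' (by simp)
      have hcombh : (ω'.dropLast ++ π).head? = ω'.head? := by
        by_cases hdl : ω'.dropLast = []
        · have hb'e : ω' = [b'] := by rw [hdecω', hdl]; rfl
          rw [hdl, List.nil_append, hπh, hb'e]
          rfl
        · obtain ⟨z, zs, hdlc⟩ := List.exists_cons_of_ne_nil hdl
          rw [List.head?_append, hdlc]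
          conv_rhs => rw [hdecω', hdlc]
          simp
      have hcombl : (ω'.dropLast ++ π).getLast? = some b := by
        rw [List.getLast?_append, hπl]; rfl
      have hωheads : ω.head? = ω'.head? := by
        rw [hω, hω']; rfl
      have happ := hsc.2 ω (ω'.dropLast ++ π) hωH hcomb hωH.2.1 hcomb.2.1
        (by rw [hcombh, hωheads]) (by rw [hωl, hcombl])
      have hlift : HomotopicIn (ext infty H B) (level (ext infty H B) 1)
          ω (ω'.dropLast ++ π) := homotopicIn_mono hsub (level_mono hsub 1) happ
      have hw : Good (ext infty H B) (level (ext infty H B) 1)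
          ([] ++ ω ++ [({infty} : Finset α)]) := by simpa using hγd
      have hA := homotopicIn_cong hlift hw
      simp only [List.append_assoc, List.cons_append, List.nil_append,
        List.singleton_append, List.append_nil] at hA
      rw [hdecγ, hdecγ']
      rw [hdecω']
      have goal1 := homotopicIn_trans hA (homotopicIn_symm hA')
      simp only [List.append_assoc, List.cons_append, List.nil_append,
        List.singleton_append, List.append_nil] at goal1 ⊢
      exact goal1
    · -- Case A : no {infty} endpoint
      have hnoinf : ({infty} : Finset α) ∉ c0 :: rest := by
        intro hmem
        rcases List.mem_cons.1 hmem with h | h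
        · exact hc0 h.symm
        · rcases hrest : rest with _ | ⟨r, t⟩
          · rw [hrest] at h; simp at h
          · rw [hrest] at h
            rcases mem_tail_shape (by simp) (by
              rw [← hrest]
              rwa [getLast?_cons_of_ne_nil (by rw [hrest]; simp)] at hLs) h with h2 | h2
            · exact hn (by rw [hrest]; simpa using h2)
            · exact hL h2.symm
      have hnoinf' : ({infty} : Finset α) ∉ c0 :: rest' := by
        intro hmem
        rcases List.mem_cons.1 hmem with h | h
        · exact hc0 h.symm
        · rcases hrest : rest' with _ | ⟨r, t⟩
          · rw [hrest] at h; simp at h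
          · rw [hrest] at h
            rcases mem_tail_shape (by simp) (by
              rw [← hrest]
              rwa [getLast?_cons_of_ne_nil (by rw [hrest]; simp)] at hLs') h with h2 | h2
            · exact hn' (by rw [hrest]; simpa using h2)
            · exact hL h2.symm
      have hp : IsKPath H 1 (c0 :: rest) := noInf_path hni hBH hγ.1 hnoinf
      have hp' : IsKPath H 1 (c0 :: rest') := noInf_path hni hBH hγ'.1 hnoinf'
      have happ := hsc.2 _ _ hp hp' hp.2.1 hp'.2.1 rfl hl
      exact homotopicIn_mono hsub (level_mono hsub 1) happ

end Main
end BlowupAux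
namespace BlowupAux
set_option linter.unusedSectionVars false
set_option maxHeartbeats 2000000

variable {α : Type*} [DecidableEq α] {infty : α} {H B : Set (Finset α)}

section Final

variable (hni : ∀ J ∈ H, infty ∉ J) (hBH : B ⊆ H) (hB0 : ∅ ∈ B)
  (hBconn : KConnectedIn B 1 (B ∩ level H 1)) (hsc : SimplyConnected H)
include hni hBH hB0 hBconn hsc

lemma main_homotopy {γ γ' : List (Finset α)}
    (hγ : Good (ext infty H B) (level (ext infty H B) 1) γ)
    (hγ' : Good (ext infty H B) (level (ext infty H B) 1) γ')
    (hh : γ.head? = γ'.head?) (hl : γ.getLast? = γ'.getLast?) :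
    HomotopicIn (ext infty H B) (level (ext infty H B) 1) γ γ' := by
  obtain ⟨γ₁, h1, hn1⟩ := normalize hni hBH hB0 hBconn hγ
  obtain ⟨γ₁', h1', hn1'⟩ := normalize hni hBH hB0 hBconn hγ'
  have e1 := homotopicIn_head h1
  have e1' := homotopicIn_head h1'
  have hmid := main_normalized hni hBH hB0 hBconn hsc
    (good_of_rtg hγ h1.2) (good_of_rtg hγ' h1'.2) hn1 hn1'
    (by rw [← e1.1, ← e1'.1, hh]) (by rw [← e1.2, ← e1'.2, hl])
  exact homotopicIn_trans h1 (homotopicIn_trans hmid (homotopicIn_symm h1'))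

lemma ext_oneConnected (hBne : (B ∩ level H 1).Nonempty) :
    KConnectedIn (ext infty H B) 1 (level (ext infty H B) 1) := by
  obtain ⟨c, hcB, hcH1⟩ := hBne
  have hsub : H ⊆ ext infty H B := Set.subset_union_left
  intro J hJ J' hJ'
  rcases level_one_cases hni hBH hJ with rfl | hJH
  · rcases level_one_cases hni hBH hJ' with rfl | hJH'
    · -- {infty} to {infty}
      refine ⟨[({infty} : Finset α)], ⟨by simp, ?_, List.isChain_singleton _⟩,
        ⟨rfl, by simp⟩, ?_⟩ <;>
      · intro K hK
        simp only [List.mem_singleton] at hK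
        subst hK
        exact infty_mem_level_one hni hBH hB0
    · -- {infty} to J'
      obtain ⟨τ, hτ, ⟨hτh, hτl⟩, hτsup⟩ := hsc.1 c hcH1 J' hJH'
      refine ⟨({infty} : Finset α) :: τ, ⟨by simp, ?_, ?_⟩, ⟨rfl, ?_⟩, ?_⟩
      · intro K hK
        rcases List.mem_cons.1 hK with rfl | hK
        · exact infty_mem_level_one hni hBH hB0
        · exact level_mono hsub 1 (hτ.2.1 K hK)
      · refine List.isChain_cons.2 ⟨fun y hy => ?_, ?_⟩
        · rw [hτh, Option.mem_some_iff] at hy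
          subst hy
          exact infty_union_mem hni hBH hcB hcH1.2
        · exact (isKPath_mono hsub hτ).2.2
      · rw [getLast?_cons_of_ne_nil hτ.1]
        exact hτl
      · intro K hK
        rcases List.mem_cons.1 hK with rfl | hK
        · exact infty_mem_level_one hni hBH hB0
        · exact level_mono hsub 1 (hτ.2.1 K hK)
  · rcases level_one_cases hni hBH hJ' with rfl | hJH'
    · -- J to {infty}
      obtain ⟨τ, hτ, ⟨hτh, hτl⟩, hτsup⟩ := hsc.1 J hJH c hcH1
      refine ⟨τ ++ [({infty} : Finset α)], ⟨by simp, ?_, ?_⟩, ⟨?_, ?_⟩, ?_⟩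
      · intro K hK
        rcases List.mem_append.1 hK with hK | hK
        · exact level_mono hsub 1 (hτ.2.1 K hK)
        · simp only [List.mem_singleton] at hK
          subst hK
          exact infty_mem_level_one hni hBH hB0
      · refine List.isChain_append.2 ⟨(isKPath_mono hsub hτ).2.2,
          List.isChain_singleton _, fun x hx y hy => ?_⟩
        rw [hτl, Option.mem_some_iff] at hx
        subst hx
        simp only [List.head?_cons, Option.mem_some_iff] at hy
        subst hy
        exact union_infty_mem hni hBH hcB hcH1.2
      · rw [List.head?_append, hτh]; rfl
      · exact List.getLast?_concat
      · intro K hK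
        rcases List.mem_append.1 hK with hK | hK
        · exact level_mono hsub 1 (hτ.2.1 K hK)
        · simp only [List.mem_singleton] at hK
          subst hK
          exact infty_mem_level_one hni hBH hB0
    · -- both in H
      obtain ⟨τ, hτ, hjoins, hτsup⟩ := hsc.1 J hJH J' hJH'
      exact ⟨τ, isKPath_mono hsub hτ, hjoins, fun K hK => level_mono hsub 1 (hτ.2.1 K hK)⟩

end Final
end BlowupAux

open BlowupAux in
/-- (Blow-up with empty `Z_Y`.) If `H = H_3` is simply connected,
`∞ ∉ I`, and `B ⊆ H` is closed under subsets, has strata of at most 2 elements, meets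
`H(1)`, and `B ∩ H(1)` is 1-connected in `B`, then `H' = H ∪ {J ∪ {∞} : J ∈ B}` is a
simply connected combinatorial strata structure with minimal set of indices `I ∪ {∞}`. -/
theorem blowup_empty_center_simplyConnected
    {α : Type*} [Fintype α] [DecidableEq α] (I : Finset α) (infty : α)
    (hinfty : infty ∉ I) (H : Set (Finset α)) (hH : IsCSSOn I H)
    (hsc : SimplyConnected H) (hH3 : H = H3 H)
    (B : Set (Finset α)) (hBH : B ⊆ H)
    (hBdown : ∀ J ∈ B, ∀ J' : Finset α, J' ⊆ J → J' ∈ B)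
    (hBcard : ∀ J ∈ B, J.card ≤ 2)
    (hBne : (B ∩ level H 1).Nonempty)
    (hBconn : KConnectedIn B 1 (B ∩ level H 1)) :
    IsCSSOn (insert infty I)
        (H ∪ {K : Finset α | ∃ J ∈ B, K = insert infty J}) ∧
      SimplyConnected (H ∪ {K : Finset α | ∃ J ∈ B, K = insert infty J}) := by
  have hni : ∀ J ∈ H, infty ∉ J := fun J hJ hm => hinfty (hH.1 J hJ hm)
  have hB0 : ∅ ∈ B := by
    obtain ⟨c, hc⟩ := hBne
    exact hBdown c hc.1 ∅ (Finset.empty_subset _)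
  have hset : H ∪ {K : Finset α | ∃ J ∈ B, K = insert infty J} = ext infty H B := rfl
  rw [hset]
  constructor
  · refine ⟨?_, ?_, ?_⟩
    · rintro J (hJ | ⟨J₀, hJ₀, rfl⟩)
      · exact (hH.1 J hJ).trans (Finset.subset_insert _ _)
      · exact Finset.insert_subset_insert _ (hH.1 J₀ (hBH hJ₀))
    · rintro J (hJ | ⟨J₀, hJ₀, rfl⟩) J' hsub
      · exact Or.inl (hH.2.1 J hJ J' hsub)
      · by_cases hmem : infty ∈ J'
        · refine Or.inr ⟨J'.erase infty, hBdown J₀ hJ₀ _ ?_, (Finset.insert_erase hmem).symm⟩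
          intro x hx
          have hx2 := hsub (Finset.mem_of_mem_erase hx)
          rcases Finset.mem_insert.1 hx2 with h | h
          · exact absurd h (Finset.ne_of_mem_erase hx)
          · exact h
        · refine Or.inl (hBH (hBdown J₀ hJ₀ J' ?_))
          intro x hx
          rcases Finset.mem_insert.1 (hsub hx) with h | h
          · exact absurd (h ▸ hx) hmem
          · exact h
    · intro i hi
      rcases Finset.mem_insert.1 hi with rfl | hi
      · exact Or.inr ⟨∅, hB0, by simp⟩
      · exact Or.inl (hH.2.2 i hi)
  · refine ⟨ext_oneConnected hni hBH hB0 hBconn hsc hBne, ?_⟩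
    intro γ γ' h1 h2 hs1 hs2 hh hl
    exact main_homotopy hni hBH hB0 hBconn hsc ⟨h1, hs1⟩ ⟨h2, hs2⟩ hh hl
end

section
/- Let H ⊆ 𝒫(I) be a simply connected combinatorial strata structure with minimal set of indices I, let ∞ ∉ I, and let J₀ = {i₁, i₂, i₃} ∈ H(3). Set B = {J ∈ H : #J ≤ 2 and J ∪ J₀ ∈ H}. Then H′ = (H_3 \ {J₀}) ∪ {J ∪ {∞} : J ∈ B} is a simply connected combinatorial strata structure with minimal set of indices I ∪ {∞}. -/
namespace BlowupProof

open List

variable {β : Type*} [DecidableEq β]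

section Generic

variable {H0 A0 : Set (Finset β)}

lemma isKPath_glue {k : ℕ} {a b c b' : List (Finset β)}
    (h : IsKPath H0 k (a ++ b ++ c)) (hb' : IsKPath H0 k b')
    (hh : b'.head? = b.head?) (hl : b'.getLast? = b.getLast?) :
    IsKPath H0 k (a ++ b' ++ c) := by
  obtain ⟨hne, hmem, hch⟩ := h
  obtain ⟨hne', hmem', hch'⟩ := hb'
  have hbne : b ≠ [] := by
    rintro rfl
    cases b' with
    | nil => exact hne' rfl
    | cons x l => simp at hh
  refine ⟨by simp [hne'], ?_, ?_⟩
  · intro J hJ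
    simp only [List.mem_append] at hJ
    rcases hJ with (hJ | hJ) | hJ
    · exact hmem J (by simp [hJ])
    · exact hmem' J hJ
    · exact hmem J (by simp [hJ])
  · unfold List.Chain' at hch ⊢
    rw [List.append_assoc, List.isChain_append, List.isChain_append] at hch ⊢
    obtain ⟨ha, ⟨hb, hc, hbc⟩, habc⟩ := hch
    refine ⟨ha, ⟨hch', hc, ?_⟩, ?_⟩
    · rw [hl]; exact hbc
    · intro x hx y hy
      apply habc x hx y
      rw [List.head?_append_of_ne_nil _ hbne]
      rw [List.head?_append_of_ne_nil _ hne'] at hy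
      rw [← hh]; exact hy

lemma elemPairCore_ends {ε ε' : List (Finset β)} (h : ElemPairCore H0 ε ε') :
    ε = ε' ∨ (ε ≠ [] ∧ ε' ≠ [] ∧ ε.head? = ε'.head? ∧ ε.getLast? = ε'.getLast?) := by
  rcases h with rfl | ⟨x, y, rfl, rfl⟩ | ⟨x, y, z, rfl, rfl, -⟩
  · exact Or.inl rfl
  · right; refine ⟨by simp, by simp, by simp, by simp⟩
  · right; refine ⟨by simp, by simp, by simp, by simp⟩

lemma elemHomotopy_symm {g₁ g₂ : List (Finset β)} (h : ElemHomotopy H0 g₁ g₂) :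
    ElemHomotopy H0 g₂ g₁ := by
  obtain ⟨δ, ε₁, ε₂, ρ, hp, rfl, rfl⟩ := h
  exact ⟨δ, ε₂, ε₁, ρ, hp.symm, rfl, rfl⟩

lemma elemHomotopy_ends {g₁ g₂ : List (Finset β)} (h : ElemHomotopy H0 g₁ g₂) :
    g₁.head? = g₂.head? ∧ g₁.getLast? = g₂.getLast? := by
  obtain ⟨δ, ε₁, ε₂, ρ, hp, rfl, rfl⟩ := h
  have hends : ε₁ = ε₂ ∨
      (ε₁ ≠ [] ∧ ε₂ ≠ [] ∧ ε₁.head? = ε₂.head? ∧ ε₁.getLast? = ε₂.getLast?) := by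
    rcases hp with h | h
    · exact elemPairCore_ends h
    · rcases elemPairCore_ends h with h | ⟨h1, h2, h3, h4⟩
      · exact Or.inl h.symm
      · exact Or.inr ⟨h2, h1, h3.symm, h4.symm⟩
  rcases hends with rfl | ⟨h1, h2, h3, h4⟩
  · exact ⟨rfl, rfl⟩
  constructor
  · cases δ with
    | nil =>
        simp only [List.nil_append]
        rw [List.head?_append_of_ne_nil _ h1, List.head?_append_of_ne_nil _ h2, h3]
    | cons d l => simp
  · rcases eq_or_ne ρ [] with rfl | hρ
    · simp only [List.append_nil]
      rw [List.getLast?_append_of_ne_nil _ h1, List.getLast?_append_of_ne_nil _ h2, h4]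
    · rw [List.append_assoc, List.append_assoc,
        List.getLast?_append_of_ne_nil _ (l₂ := ε₁ ++ ρ) (by simp [hρ]),
        List.getLast?_append_of_ne_nil _ (l₂ := ε₂ ++ ρ) (by simp [hρ]),
        List.getLast?_append_of_ne_nil _ hρ, List.getLast?_append_of_ne_nil _ hρ]

/-- One step of the homotopy relation. -/
def Step (H0 A0 : Set (Finset β)) (g₁ g₂ : List (Finset β)) : Prop :=
  ElemHomotopy H0 g₁ g₂ ∧ IsKPath H0 1 g₂ ∧ ∀ J ∈ g₂, J ∈ A0

lemma homotopicIn_def {γ γ' : List (Finset β)} :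
    HomotopicIn H0 A0 γ γ' ↔
      (IsKPath H0 1 γ ∧ ∀ J ∈ γ, J ∈ A0) ∧
        Relation.ReflTransGen (Step H0 A0) γ γ' := Iff.rfl

lemma rtg_valid_end {γ γ' : List (Finset β)}
    (h : Relation.ReflTransGen (Step H0 A0) γ γ')
    (hγ : IsKPath H0 1 γ ∧ ∀ J ∈ γ, J ∈ A0) :
    IsKPath H0 1 γ' ∧ ∀ J ∈ γ', J ∈ A0 := by
  induction h with
  | refl => exact hγ
  | tail _ hbc ih => exact ⟨hbc.2.1, hbc.2.2⟩

lemma homotopicIn_valid_end {γ γ' : List (Finset β)} (h : HomotopicIn H0 A0 γ γ') :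
    IsKPath H0 1 γ' ∧ ∀ J ∈ γ', J ∈ A0 :=
  rtg_valid_end h.2 h.1

lemma homotopicIn_ends {γ γ' : List (Finset β)} (h : HomotopicIn H0 A0 γ γ') :
    γ.head? = γ'.head? ∧ γ.getLast? = γ'.getLast? := by
  obtain ⟨-, h⟩ := h
  induction h with
  | refl => exact ⟨rfl, rfl⟩
  | tail _ hbc ih =>
      obtain ⟨h1, h2⟩ := elemHomotopy_ends hbc.1
      exact ⟨ih.1.trans h1, ih.2.trans h2⟩

lemma homotopicIn_refl {γ : List (Finset β)} (h1 : IsKPath H0 1 γ)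
    (h2 : ∀ J ∈ γ, J ∈ A0) : HomotopicIn H0 A0 γ γ :=
  ⟨⟨h1, h2⟩, Relation.ReflTransGen.refl⟩

lemma homotopicIn_trans {γ₁ γ₂ γ₃ : List (Finset β)} (h : HomotopicIn H0 A0 γ₁ γ₂)
    (h' : HomotopicIn H0 A0 γ₂ γ₃) : HomotopicIn H0 A0 γ₁ γ₃ :=
  ⟨h.1, h.2.trans h'.2⟩

lemma homotopicIn_symm {γ γ' : List (Finset β)} (h : HomotopicIn H0 A0 γ γ') :
    HomotopicIn H0 A0 γ' γ := by
  obtain ⟨hγ, hr⟩ := h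
  refine ⟨rtg_valid_end hr hγ, ?_⟩
  induction hr with
  | refl => exact Relation.ReflTransGen.refl
  | @tail b c hab hbc ih =>
      have hb := rtg_valid_end hab hγ
      exact Relation.ReflTransGen.head ⟨elemHomotopy_symm hbc.1, hb.1, hb.2⟩ ih

lemma homotopicIn_single {γ γ' : List (Finset β)} (h1 : IsKPath H0 1 γ)
    (hA : ∀ J ∈ γ, J ∈ A0) (hom : ElemHomotopy H0 γ γ') (h2 : IsKPath H0 1 γ')
    (hA' : ∀ J ∈ γ', J ∈ A0) : HomotopicIn H0 A0 γ γ' :=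
  ⟨⟨h1, hA⟩, Relation.ReflTransGen.single ⟨hom, h2, hA'⟩⟩

lemma isKPath_append_left {k : ℕ} {l₁ l₂ : List (Finset β)}
    (h : IsKPath H0 k (l₁ ++ l₂)) (hne : l₁ ≠ []) : IsKPath H0 k l₁ := by
  obtain ⟨-, hmem, hch⟩ := h
  exact ⟨hne, fun J hJ => hmem J (by simp [hJ]), (List.isChain_append.mp hch).1⟩

lemma isKPath_junction {k : ℕ} {l₁ l₂ : List (Finset β)} (h : IsKPath H0 k (l₁ ++ l₂)) :
    ∀ x ∈ l₁.getLast?, ∀ y ∈ l₂.head?, x ∪ y ∈ level H0 (k + 1) :=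
  (List.isChain_append.mp h.2.2).2.2

lemma isKPath_append {k : ℕ} {l₁ l₂ : List (Finset β)} (h₁ : IsKPath H0 k l₁)
    (h₂ : IsKPath H0 k l₂)
    (hj : ∀ x ∈ l₁.getLast?, ∀ y ∈ l₂.head?, x ∪ y ∈ level H0 (k + 1)) :
    IsKPath H0 k (l₁ ++ l₂) := by
  refine ⟨by simp [h₁.1], ?_, ?_⟩
  · intro J hJ
    rcases List.mem_append.mp hJ with hJ | hJ
    · exact h₁.2.1 J hJ
    · exact h₂.2.1 J hJ
  · exact List.isChain_append.mpr ⟨h₁.2.2, h₂.2.2, hj⟩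

lemma isKPath_singleton {k : ℕ} {J : Finset β} (h : J ∈ level H0 k) :
    IsKPath H0 k [J] :=
  ⟨by simp, by simpa using h, List.isChain_singleton _⟩

lemma isKPath_pair {k : ℕ} {X Y : Finset β} (hX : X ∈ level H0 k) (hY : Y ∈ level H0 k)
    (hXY : X ∪ Y ∈ level H0 (k + 1)) : IsKPath H0 k [X, Y] := by
  refine ⟨by simp, ?_, ?_⟩
  · intro J hJ; rcases List.mem_pair.mp hJ with rfl | rfl <;> assumption
  · exact List.isChain_pair.mpr hXY

lemma homotopicIn_conj {pre post σ σ' : List (Finset β)} (h : HomotopicIn H0 A0 σ σ')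
    (hv : IsKPath H0 1 (pre ++ σ ++ post)) (hm : ∀ J ∈ pre ++ post, J ∈ A0) :
    HomotopicIn H0 A0 (pre ++ σ ++ post) (pre ++ σ' ++ post) := by
  obtain ⟨⟨hσ, hσA⟩, hr⟩ := h
  have hmem : ∀ g : List (Finset β), (∀ J ∈ g, J ∈ A0) → ∀ J ∈ pre ++ g ++ post, J ∈ A0 := by
    intro g hg J hJ
    simp only [List.mem_append] at hJ
    rcases hJ with (hJ | hJ) | hJ
    · exact hm J (by simp [hJ])
    · exact hg J hJ
    · exact hm J (by simp [hJ])
  induction hr with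
  | refl => exact homotopicIn_refl hv (hmem σ hσA)
  | @tail b c hab hbc ih =>
      have hb := rtg_valid_end hab ⟨hσ, hσA⟩
      have hvb : IsKPath H0 1 (pre ++ b ++ post) := (homotopicIn_valid_end ih).1
      have hends := elemHomotopy_ends hbc.1
      have hvc : IsKPath H0 1 (pre ++ c ++ post) :=
        isKPath_glue hvb hbc.2.1 hends.1.symm hends.2.symm
      refine homotopicIn_trans ih
        (homotopicIn_single hvb (hmem b hb.2) ?_ hvc (hmem c hbc.2.2))
      obtain ⟨δ, ε₁, ε₂, ρ, hp, rfl, rfl⟩ := hbc.1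
      exact ⟨pre ++ δ, ε₁, ε₂, ρ ++ post, hp, by simp, by simp⟩

lemma chain'_mem_imp {γ : List (Finset β)} {R S : Finset β → Finset β → Prop}
    (himp : ∀ a ∈ γ, ∀ b ∈ γ, R a b → S a b) (h : γ.Chain' R) : γ.Chain' S :=
  (List.IsChain.iff_mem.mp h).imp fun a b hab => himp a hab.1 b hab.2.1 hab.2.2

lemma isKPath_adj {k : ℕ} {a c : List (Finset β)} {X Y : Finset β}
    (h : IsKPath H0 k (a ++ [X, Y] ++ c)) : X ∪ Y ∈ level H0 (k + 1) := by
  have hch := h.2.2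
  unfold List.Chain' at hch
  rw [List.append_assoc, List.isChain_append] at hch
  exact (List.isChain_cons_cons.mp hch.2.1).1

end Generic
end BlowupProof
set_option linter.unusedSectionVars false
namespace BlowupProof
section Blowup

variable {α : Type*} [DecidableEq α]

/-- The blown-up strata structure. -/
def bU (H : Set (Finset α)) (infty i₁ i₂ i₃ : α) : Set (Finset α) :=
  (H3 H \ {({i₁, i₂, i₃} : Finset α)}) ∪
    {K : Finset α | ∃ J ∈ H, J.card ≤ 2 ∧
      J ∪ ({i₁, i₂, i₃} : Finset α) ∈ H ∧ K = insert infty J}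

variable {I : Finset α} {infty : α} {H : Set (Finset α)} {i₁ i₂ i₃ : α}

lemma union_singletons {a b : α} : ({a} : Finset α) ∪ {b} = ({a, b} : Finset α) := by
  ext t; simp

lemma mem_level_iff {H0 : Set (Finset α)} {k : ℕ} {K : Finset α} :
    K ∈ level H0 k ↔ K ∈ H0 ∧ K.card = k := Iff.rfl

lemma empty_mem (hH : IsCSSOn I H) (hJ0 : ({i₁, i₂, i₃} : Finset α) ∈ level H 3) :
    (∅ : Finset α) ∈ H :=
  hH.2.1 _ hJ0.1 ∅ (Finset.empty_subset _)

lemma infty_notMem (hinf : infty ∉ I) (hH : IsCSSOn I H) {J : Finset α} (hJ : J ∈ H) :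
    infty ∉ J := fun h => hinf (hH.1 J hJ h)

lemma singleton_mem (hH : IsCSSOn I H) {b : α} (hb : ({b} : Finset α) ∈ H) : b ∈ I :=
  hH.1 _ hb (Finset.mem_singleton_self b)

lemma J0_subset_I (hH : IsCSSOn I H) (hJ0 : ({i₁, i₂, i₃} : Finset α) ∈ level H 3) :
    ({i₁, i₂, i₃} : Finset α) ⊆ I := hH.1 _ hJ0.1

lemma sub_J0_mem (hH : IsCSSOn I H) (hJ0 : ({i₁, i₂, i₃} : Finset α) ∈ level H 3)
    {J : Finset α} (hJ : J ⊆ ({i₁, i₂, i₃} : Finset α)) : J ∈ H :=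
  hH.2.1 _ hJ0.1 J hJ

lemma J0_distinct (hJ0 : ({i₁, i₂, i₃} : Finset α) ∈ level H 3) :
    i₁ ≠ i₂ ∧ i₁ ≠ i₃ ∧ i₂ ≠ i₃ := by
  have h := hJ0.2
  have key : ∀ a b : α, (({a, b} : Finset α)).card ≤ 2 := by
    intro a b
    have := Finset.card_insert_le a ({b} : Finset α)
    simpa using this
  refine ⟨?_, ?_, ?_⟩ <;> rintro rfl
  · have hsub : ({i₁, i₁, i₃} : Finset α) ⊆ {i₁, i₃} := by intro x; simp only [Finset.mem_insert, Finset.mem_singleton]; tauto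
    have := (Finset.card_le_card hsub).trans (key _ _)
    omega
  · have hsub : ({i₁, i₂, i₁} : Finset α) ⊆ {i₁, i₂} := by intro x; simp only [Finset.mem_insert, Finset.mem_singleton]; tauto
    have := (Finset.card_le_card hsub).trans (key _ _)
    omega
  · have hsub : ({i₁, i₂, i₂} : Finset α) ⊆ {i₁, i₂} := by intro x; simp only [Finset.mem_insert, Finset.mem_singleton]; tauto
    have := (Finset.card_le_card hsub).trans (key _ _)
    omega

lemma mem_H3_iff (hH : IsCSSOn I H) (hJ0 : ({i₁, i₂, i₃} : Finset α) ∈ level H 3)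
    {K : Finset α} : K ∈ H3 H ↔ K ∈ H ∧ K.card ≤ 3 := by
  constructor
  · intro h
    rcases h with ((h | h) | h) | h
    · rw [Set.mem_singleton_iff] at h; subst h
      exact ⟨empty_mem hH hJ0, by simp⟩
    · exact ⟨h.1, by have := h.2; omega⟩
    · exact ⟨h.1, by have := h.2; omega⟩
    · exact ⟨h.1, by have := h.2; omega⟩
  · rintro ⟨h1, h2⟩
    have : K.card = 0 ∨ K.card = 1 ∨ K.card = 2 ∨ K.card = 3 := by omega
    rcases this with h | h | h | h
    · left; left; left
      rw [Set.mem_singleton_iff]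
      exact Finset.card_eq_zero.mp h
    · left; left; right; exact ⟨h1, h⟩
    · left; right; exact ⟨h1, h⟩
    · right; exact ⟨h1, h⟩

lemma mem_bU_iff (hH : IsCSSOn I H) (hJ0 : ({i₁, i₂, i₃} : Finset α) ∈ level H 3)
    {K : Finset α} :
    K ∈ bU H infty i₁ i₂ i₃ ↔
      (K ∈ H ∧ K.card ≤ 3 ∧ K ≠ {i₁, i₂, i₃}) ∨
        ∃ J, J ∈ H ∧ J.card ≤ 2 ∧ J ∪ ({i₁, i₂, i₃} : Finset α) ∈ H ∧
          K = insert infty J := by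
  unfold bU
  simp only [Set.mem_union, Set.mem_diff, Set.mem_singleton_iff, Set.mem_setOf_eq,
    mem_H3_iff hH hJ0]
  tauto

lemma card_insert_infty (hinf : infty ∉ I) (hH : IsCSSOn I H) {J : Finset α}
    (hJ : J ∈ H) : (insert infty J).card = J.card + 1 :=
  Finset.card_insert_of_notMem (infty_notMem hinf hH hJ)

lemma level1_bU_iff (hinf : infty ∉ I) (hH : IsCSSOn I H)
    (hJ0 : ({i₁, i₂, i₃} : Finset α) ∈ level H 3) {K : Finset α} :
    K ∈ level (bU H infty i₁ i₂ i₃) 1 ↔ K ∈ level H 1 ∨ K = {infty} := by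
  constructor
  · rintro ⟨hK, hc⟩
    rcases (mem_bU_iff hH hJ0).mp hK with ⟨h1, -, -⟩ | ⟨J, hJ, -, -, rfl⟩
    · exact Or.inl ⟨h1, hc⟩
    · right
      rw [card_insert_infty hinf hH hJ] at hc
      have : J = ∅ := Finset.card_eq_zero.mp (by omega)
      rw [this]; rfl
  · rintro (⟨h1, hc⟩ | rfl)
    · exact ⟨(mem_bU_iff hH hJ0).mpr (Or.inl ⟨h1, by omega, by
        rintro rfl; rw [hJ0.2] at hc; omega⟩), hc⟩
    · refine ⟨(mem_bU_iff hH hJ0).mpr (Or.inr ⟨∅, empty_mem hH hJ0, by simp, ?_, by simp⟩), by simp⟩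
      simpa using hJ0.1

lemma level2_bU_of_level2 (hH : IsCSSOn I H)
    (hJ0 : ({i₁, i₂, i₃} : Finset α) ∈ level H 3) {K : Finset α}
    (h : K ∈ level H 2) : K ∈ level (bU H infty i₁ i₂ i₃) 2 := by
  refine ⟨(mem_bU_iff hH hJ0).mpr (Or.inl ⟨h.1, by have := h.2; omega, ?_⟩), h.2⟩
  rintro rfl
  have h2 := h.2
  have h3 := hJ0.2
  omega

lemma level2_bU_of_infty (hinf : infty ∉ I) (hH : IsCSSOn I H)
    (hJ0 : ({i₁, i₂, i₃} : Finset α) ∈ level H 3) {b : α}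
    (hb : ({b} : Finset α) ∈ H) (hb' : ({b} : Finset α) ∪ {i₁, i₂, i₃} ∈ H) :
    insert infty ({b} : Finset α) ∈ level (bU H infty i₁ i₂ i₃) 2 := by
  refine ⟨(mem_bU_iff hH hJ0).mpr (Or.inr ⟨{b}, hb, by simp, hb', rfl⟩), ?_⟩
  rw [card_insert_infty hinf hH hb]; simp

lemma level2_bU_no_infty (hinf : infty ∉ I) (hH : IsCSSOn I H)
    (hJ0 : ({i₁, i₂, i₃} : Finset α) ∈ level H 3) {K : Finset α}
    (h : K ∈ level (bU H infty i₁ i₂ i₃) 2) (hK : infty ∉ K) : K ∈ level H 2 := by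
  rcases (mem_bU_iff hH hJ0).mp h.1 with ⟨h1, -, -⟩ | ⟨J, hJ, -, -, rfl⟩
  · exact ⟨h1, h.2⟩
  · exact absurd (Finset.mem_insert_self _ _) hK

lemma level2_bU_infty (hinf : infty ∉ I) (hH : IsCSSOn I H)
    (hJ0 : ({i₁, i₂, i₃} : Finset α) ∈ level H 3) {K : Finset α}
    (h : K ∈ level (bU H infty i₁ i₂ i₃) 2) (hK : infty ∈ K) :
    ∃ b, ({b} : Finset α) ∈ H ∧ ({b} : Finset α) ∪ {i₁, i₂, i₃} ∈ H ∧
      K = insert infty {b} := by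
  rcases (mem_bU_iff hH hJ0).mp h.1 with ⟨h1, -, -⟩ | ⟨J, hJ, -, hJJ0, rfl⟩
  · exact absurd (hH.1 K h1 hK) hinf
  · have hc := h.2
    rw [card_insert_infty hinf hH hJ] at hc
    obtain ⟨b, rfl⟩ := Finset.card_eq_one.mp (show J.card = 1 by omega)
    exact ⟨b, hJ, hJJ0, rfl⟩

lemma level3_bU_of_level3 (hH : IsCSSOn I H)
    (hJ0 : ({i₁, i₂, i₃} : Finset α) ∈ level H 3) {K : Finset α}
    (h : K ∈ level H 3) (hne : K ≠ {i₁, i₂, i₃}) :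
    K ∈ level (bU H infty i₁ i₂ i₃) 3 :=
  ⟨(mem_bU_iff hH hJ0).mpr (Or.inl ⟨h.1, by have := h.2; omega, hne⟩), h.2⟩

lemma level3_bU_of_infty (hinf : infty ∉ I) (hH : IsCSSOn I H)
    (hJ0 : ({i₁, i₂, i₃} : Finset α) ∈ level H 3) {J : Finset α}
    (hJ : J ∈ H) (hc : J.card = 2) (hJJ0 : J ∪ {i₁, i₂, i₃} ∈ H) :
    insert infty J ∈ level (bU H infty i₁ i₂ i₃) 3 := by
  refine ⟨(mem_bU_iff hH hJ0).mpr (Or.inr ⟨J, hJ, by omega, hJJ0, rfl⟩), ?_⟩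
  rw [card_insert_infty hinf hH hJ, hc]

end Blowup
end BlowupProof
namespace BlowupProof
section Blowup2
set_option linter.unusedSectionVars false

variable {α : Type*} [DecidableEq α] {I : Finset α} {infty : α} {H : Set (Finset α)}
  {i₁ i₂ i₃ : α}

lemma bU_isCSSOn (hinf : infty ∉ I) (hH : IsCSSOn I H)
    (hJ0 : ({i₁, i₂, i₃} : Finset α) ∈ level H 3) :
    IsCSSOn (insert infty I) (bU H infty i₁ i₂ i₃) := by
  refine ⟨?_, ?_, ?_⟩
  · intro K hK
    rcases (mem_bU_iff hH hJ0).mp hK with ⟨h1, -, -⟩ | ⟨J, hJ, -, -, rfl⟩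
    · exact (hH.1 K h1).trans (Finset.subset_insert _ _)
    · exact Finset.insert_subset_insert _ (hH.1 J hJ)
  · intro K hK K' hK'
    rcases (mem_bU_iff hH hJ0).mp hK with ⟨h1, h2, h3⟩ | ⟨J, hJ, hc, hJJ0, rfl⟩
    · refine (mem_bU_iff hH hJ0).mpr (Or.inl ⟨hH.2.1 K h1 K' hK',
        le_trans (Finset.card_le_card hK') h2, ?_⟩)
      rintro rfl
      have : ({i₁, i₂, i₃} : Finset α) = K :=
        Finset.eq_of_subset_of_card_le hK' (by rw [hJ0.2]; exact h2)
      exact h3 this.symm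
    · by_cases hi : infty ∈ K'
      · have hsub : K'.erase infty ⊆ J := by
          rw [← Finset.subset_insert_iff]; exact hK'
        refine (mem_bU_iff hH hJ0).mpr (Or.inr ⟨K'.erase infty,
          hH.2.1 J hJ _ hsub, le_trans (Finset.card_le_card hsub) hc, ?_, ?_⟩)
        · exact hH.2.1 _ hJJ0 _ (Finset.union_subset_union_left hsub)
        · exact (Finset.insert_erase hi).symm
      · have hsub : K' ⊆ J := by
          intro x hx
          rcases Finset.mem_insert.mp (hK' hx) with rfl | h
          · exact absurd hx hi
          · exact h
        refine (mem_bU_iff hH hJ0).mpr (Or.inl ⟨hH.2.1 J hJ _ hsub,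
          le_trans (Finset.card_le_card hsub) (by omega), ?_⟩)
        rintro rfl
        have h2 := hJ0.2
        have := Finset.card_le_card hsub
        omega
  · intro i hi
    rcases Finset.mem_insert.mp hi with rfl | hi
    · exact ((level1_bU_iff hinf hH hJ0).mpr (Or.inr rfl)).1
    · exact ((level1_bU_iff hinf hH hJ0).mpr (Or.inl ⟨hH.2.2 i hi, by simp⟩)).1

lemma isKPath_bU_of_H (hinf : infty ∉ I) (hH : IsCSSOn I H)
    (hJ0 : ({i₁, i₂, i₃} : Finset α) ∈ level H 3) {γ : List (Finset α)}
    (h : IsKPath H 1 γ) : IsKPath (bU H infty i₁ i₂ i₃) 1 γ := by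
  obtain ⟨h1, h2, h3⟩ := h
  refine ⟨h1, fun J hJ => (level1_bU_iff hinf hH hJ0).mpr (Or.inl (h2 J hJ)), ?_⟩
  exact h3.imp fun a b hab => level2_bU_of_level2 hH hJ0 hab

lemma isKPath_H_of_bU (hinf : infty ∉ I) (hH : IsCSSOn I H)
    (hJ0 : ({i₁, i₂, i₃} : Finset α) ∈ level H 3) {γ : List (Finset α)}
    (h : IsKPath (bU H infty i₁ i₂ i₃) 1 γ)
    (hfree : ∀ J ∈ γ, J ≠ ({infty} : Finset α)) : IsKPath H 1 γ := by
  obtain ⟨h1, h2, h3⟩ := h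
  have hmem : ∀ J ∈ γ, J ∈ level H 1 := by
    intro J hJ
    rcases (level1_bU_iff hinf hH hJ0).mp (h2 J hJ) with h | h
    · exact h
    · exact absurd h (hfree J hJ)
  refine ⟨h1, hmem, ?_⟩
  refine chain'_mem_imp (fun a ha b hb hab => ?_) h3
  apply level2_bU_no_infty hinf hH hJ0 hab
  intro hm
  rcases Finset.mem_union.mp hm with hx | hx
  · exact hinf (hH.1 a (hmem a ha).1 hx)
  · exact hinf (hH.1 b (hmem b hb).1 hx)

/-- The support of an `H`-path is automatically in `level H 1`. -/
lemma supp_of_isKPath {H0 : Set (Finset α)} {γ : List (Finset α)}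
    (h : IsKPath H0 1 γ) : ∀ J ∈ γ, J ∈ level H0 1 := h.2.1

lemma oneConnected_bU (hinf : infty ∉ I) (hH : IsCSSOn I H)
    (hsc : SimplyConnected H) (hJ0 : ({i₁, i₂, i₃} : Finset α) ∈ level H 3) :
    KConnectedIn (bU H infty i₁ i₂ i₃) 1 (level (bU H infty i₁ i₂ i₃) 1) := by
  have hi₁ : ({i₁} : Finset α) ∈ level H 1 :=
    ⟨sub_J0_mem hH hJ0 (by intro x; simp; tauto), by simp⟩
  have hedge : ∀ b : α, ({b} : Finset α) ∈ level H 1 →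
      ({b} : Finset α) ∪ {i₁, i₂, i₃} ∈ H → ({infty} : Finset α) ∪ {b} ∈
        level (bU H infty i₁ i₂ i₃) 2 := by
    intro b hb hb'
    have : ({infty} : Finset α) ∪ {b} = insert infty ({b} : Finset α) := by
      ext x; simp
    rw [this]
    exact level2_bU_of_infty hinf hH hJ0 hb.1 hb'
  have hedge1 : ({infty} : Finset α) ∪ {i₁} ∈ level (bU H infty i₁ i₂ i₃) 2 := by
    apply hedge i₁ hi₁
    have : ({i₁} : Finset α) ∪ {i₁, i₂, i₃} = {i₁, i₂, i₃} := by
      ext x; simp; tauto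
    rw [this]; exact hJ0.1
  intro J hJ J' hJ'
  rcases (level1_bU_iff hinf hH hJ0).mp hJ with hJA | rfl <;>
    rcases (level1_bU_iff hinf hH hJ0).mp hJ' with hJ'A | rfl
  · -- both in H
    obtain ⟨γ, hγ, hjoins, -⟩ := hsc.1 J hJA J' hJ'A
    exact ⟨γ, isKPath_bU_of_H hinf hH hJ0 hγ, hjoins,
      fun K hK => (isKPath_bU_of_H hinf hH hJ0 hγ).2.1 K hK⟩
  · -- J ∈ H, J' = {infty}
    obtain ⟨γ, hγ, hjoins, -⟩ := hsc.1 J hJA {i₁} hi₁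
    refine ⟨γ ++ [{infty}], ?_, ?_, ?_⟩
    · refine isKPath_append (isKPath_bU_of_H hinf hH hJ0 hγ)
        (isKPath_singleton ((level1_bU_iff hinf hH hJ0).mpr (Or.inr rfl))) ?_
      intro x hx y hy
      simp only [List.head?_cons, Option.mem_def, Option.some.injEq] at hy
      rw [hjoins.2] at hx
      simp only [Option.mem_def, Option.some.injEq] at hx
      subst hx; subst hy
      have : ({i₁} : Finset α) ∪ {infty} = ({infty} : Finset α) ∪ {i₁} := by
        ext x; simp; tauto
      rw [this]; exact hedge1
    · constructor
      · rw [List.head?_append_of_ne_nil _ hγ.1]; exact hjoins.1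
      · rw [List.getLast?_append_of_ne_nil _ (by simp)]; rfl
    · intro K hK
      rcases List.mem_append.mp hK with hK | hK
      · exact (level1_bU_iff hinf hH hJ0).mpr (Or.inl (hγ.2.1 K hK))
      · simp only [List.mem_singleton] at hK
        subst hK
        exact (level1_bU_iff hinf hH hJ0).mpr (Or.inr rfl)
  · -- J = {infty}, J' ∈ H
    obtain ⟨γ, hγ, hjoins, -⟩ := hsc.1 {i₁} hi₁ J' hJ'A
    refine ⟨[({infty} : Finset α)] ++ γ, ?_, ?_, ?_⟩
    · refine isKPath_append (isKPath_singleton ((level1_bU_iff hinf hH hJ0).mpr (Or.inr rfl)))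
        (isKPath_bU_of_H hinf hH hJ0 hγ) ?_
      intro x hx y hy
      simp only [List.getLast?_singleton, Option.mem_def, Option.some.injEq] at hx
      rw [hjoins.1] at hy
      simp only [Option.mem_def, Option.some.injEq] at hy
      subst hx; subst hy
      exact hedge1
    · constructor
      · rfl
      · rw [List.getLast?_append_of_ne_nil _ hγ.1]; exact hjoins.2
    · intro K hK
      rcases List.mem_append.mp hK with hK | hK
      · simp only [List.mem_singleton] at hK
        subst hK
        exact (level1_bU_iff hinf hH hJ0).mpr (Or.inr rfl)
      · exact (level1_bU_iff hinf hH hJ0).mpr (Or.inl (hγ.2.1 K hK))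
  · -- both {infty}
    refine ⟨[({infty} : Finset α)], isKPath_singleton
      ((level1_bU_iff hinf hH hJ0).mpr (Or.inr rfl)), ⟨rfl, rfl⟩, ?_⟩
    intro K hK
    simp only [List.mem_singleton] at hK
    subst hK
    exact (level1_bU_iff hinf hH hJ0).mpr (Or.inr rfl)

end Blowup2
end BlowupProof
namespace BlowupProof
section Blowup3
set_option linter.unusedSectionVars false

variable {α : Type*} [DecidableEq α] {I : Finset α} {infty : α} {H : Set (Finset α)}
  {i₁ i₂ i₃ : α}

lemma singleton_level_bU (hinf : infty ∉ I) (hH : IsCSSOn I H)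
    (hJ0 : ({i₁, i₂, i₃} : Finset α) ∈ level H 3) {x : α}
    (hx : ({x} : Finset α) ∈ H) : ({x} : Finset α) ∈ level (bU H infty i₁ i₂ i₃) 1 :=
  (level1_bU_iff hinf hH hJ0).mpr (Or.inl ⟨hx, by simp⟩)

lemma infty_level_bU (hinf : infty ∉ I) (hH : IsCSSOn I H)
    (hJ0 : ({i₁, i₂, i₃} : Finset α) ∈ level H 3) :
    ({infty} : Finset α) ∈ level (bU H infty i₁ i₂ i₃) 1 :=
  (level1_bU_iff hinf hH hJ0).mpr (Or.inr rfl)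

lemma edge_infty_bU (hinf : infty ∉ I) (hH : IsCSSOn I H)
    (hJ0 : ({i₁, i₂, i₃} : Finset α) ∈ level H 3) {x : α}
    (hx : ({x} : Finset α) ∈ H)
    (hxJ : ({x} : Finset α) ∪ {i₁, i₂, i₃} ∈ H) :
    ({x, infty} : Finset α) ∈ level (bU H infty i₁ i₂ i₃) 2 := by
  have : ({x, infty} : Finset α) = insert infty {x} := by ext t; simp; tauto
  rw [this]
  exact level2_bU_of_infty hinf hH hJ0 hx hxJ

lemma edge_infty_bU' (hinf : infty ∉ I) (hH : IsCSSOn I H)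
    (hJ0 : ({i₁, i₂, i₃} : Finset α) ∈ level H 3) {x : α}
    (hx : ({x} : Finset α) ∈ H)
    (hxJ : ({x} : Finset α) ∪ {i₁, i₂, i₃} ∈ H) :
    ({infty, x} : Finset α) ∈ level (bU H infty i₁ i₂ i₃) 2 := by
  have : ({infty, x} : Finset α) = ({x, infty} : Finset α) := by ext t; simp; tauto
  rw [this]
  exact edge_infty_bU hinf hH hJ0 hx hxJ

lemma pair_mem_left {x y : α} (hH : IsCSSOn I H) (hxy : ({x, y} : Finset α) ∈ H) :
    ({x} : Finset α) ∈ H :=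
  hH.2.1 _ hxy _ (by intro t; simp only [Finset.mem_singleton, Finset.mem_insert]; tauto)

lemma pair_mem_right {x y : α} (hH : IsCSSOn I H) (hxy : ({x, y} : Finset α) ∈ H) :
    ({y} : Finset α) ∈ H :=
  hH.2.1 _ hxy _ (by intro t; simp only [Finset.mem_singleton, Finset.mem_insert]; tauto)

lemma pair_union_left {x y : α} (hH : IsCSSOn I H)
    (hxyJ : ({x, y} : Finset α) ∪ {i₁, i₂, i₃} ∈ H) :
    ({x} : Finset α) ∪ {i₁, i₂, i₃} ∈ H :=
  hH.2.1 _ hxyJ _ (Finset.union_subset_union_left (by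
    intro t; simp only [Finset.mem_singleton, Finset.mem_insert]; tauto))

lemma pair_union_right {x y : α} (hH : IsCSSOn I H)
    (hxyJ : ({x, y} : Finset α) ∪ {i₁, i₂, i₃} ∈ H) :
    ({y} : Finset α) ∪ {i₁, i₂, i₃} ∈ H :=
  hH.2.1 _ hxyJ _ (Finset.union_subset_union_left (by
    intro t; simp only [Finset.mem_singleton, Finset.mem_insert]; tauto))

/-- The key 2-path through infinity. -/
lemma pair2path_infty (hinf : infty ∉ I) (hH : IsCSSOn I H)
    (hJ0 : ({i₁, i₂, i₃} : Finset α) ∈ level H 3) {x y : α} (hne : x ≠ y)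
    (hxy : ({x, y} : Finset α) ∈ H)
    (hxyJ : ({x, y} : Finset α) ∪ {i₁, i₂, i₃} ∈ H) :
    IsKPath (bU H infty i₁ i₂ i₃) 2 [{x, infty}, {infty, y}] := by
  have hcard : ({x, y} : Finset α).card = 2 := by
    rw [Finset.card_insert_of_notMem (by simp [hne]), Finset.card_singleton]
  refine isKPath_pair ?_ ?_ ?_
  · exact edge_infty_bU hinf hH hJ0 (pair_mem_left hH hxy) (pair_union_left hH hxyJ)
  · exact edge_infty_bU' hinf hH hJ0 (pair_mem_right hH hxy) (pair_union_right hH hxyJ)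
  · have : ({x, infty} : Finset α) ∪ {infty, y} = insert infty {x, y} := by
      ext t; simp; tauto
    rw [this]
    exact level3_bU_of_infty hinf hH hJ0 hxy hcard hxyJ

/-- The elementary pair inserting `{infty}` between `{x}` and `{y}`. -/
lemma core_insert_infty (hinf : infty ∉ I) (hH : IsCSSOn I H)
    (hJ0 : ({i₁, i₂, i₃} : Finset α) ∈ level H 3) {x y : α} (hne : x ≠ y)
    (hxy : ({x, y} : Finset α) ∈ H)
    (hxyJ : ({x, y} : Finset α) ∪ {i₁, i₂, i₃} ∈ H) :
    ElemPairCore (bU H infty i₁ i₂ i₃)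
      [({x} : Finset α), {y}] [({x} : Finset α), {infty}, {y}] :=
  Or.inr (Or.inr ⟨x, y, infty, rfl, rfl, pair2path_infty hinf hH hJ0 hne hxy hxyJ⟩)

/-- A valid three-term path `{x}, {infty}, {y}`. -/
lemma path3_infty (hinf : infty ∉ I) (hH : IsCSSOn I H)
    (hJ0 : ({i₁, i₂, i₃} : Finset α) ∈ level H 3) {x y : α}
    (hx : ({x} : Finset α) ∈ H) (hxJ : ({x} : Finset α) ∪ {i₁, i₂, i₃} ∈ H)
    (hy : ({y} : Finset α) ∈ H) (hyJ : ({y} : Finset α) ∪ {i₁, i₂, i₃} ∈ H) :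
    IsKPath (bU H infty i₁ i₂ i₃) 1 [{x}, {infty}, {y}] := by
  refine ⟨by simp, ?_, ?_⟩
  · intro J hJ
    simp only [List.mem_cons, List.mem_singleton, List.not_mem_nil, or_false] at hJ
    rcases hJ with rfl | rfl | rfl
    · exact singleton_level_bU hinf hH hJ0 hx
    · exact infty_level_bU hinf hH hJ0
    · exact singleton_level_bU hinf hH hJ0 hy
  · unfold List.Chain'
    rw [List.isChain_cons_cons, List.isChain_cons_cons]
    refine ⟨?_, ?_, List.isChain_singleton _⟩
    · have : ({x} : Finset α) ∪ {infty} = ({x, infty} : Finset α) := by ext t; simp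
      rw [this]; exact edge_infty_bU hinf hH hJ0 hx hxJ
    · have : ({infty} : Finset α) ∪ {y} = ({infty, y} : Finset α) := by ext t; simp
      rw [this]; exact edge_infty_bU' hinf hH hJ0 hy hyJ

end Blowup3
end BlowupProof
namespace BlowupProof
section Blowup4
set_option linter.unusedSectionVars false

variable {α : Type*} [DecidableEq α] {I : Finset α} {infty : α} {H : Set (Finset α)}
  {i₁ i₂ i₃ : α}

lemma lift_core (hinf : infty ∉ I) (hH : IsCSSOn I H)
    (hJ0 : ({i₁, i₂, i₃} : Finset α) ∈ level H 3) {δ ε₁ ε₂ ρ : List (Finset α)}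
    (hp : ElemPairCore H ε₁ ε₂)
    (h1 : IsKPath H 1 (δ ++ ε₁ ++ ρ)) (h2 : IsKPath H 1 (δ ++ ε₂ ++ ρ)) :
    HomotopicIn (bU H infty i₁ i₂ i₃) (level (bU H infty i₁ i₂ i₃) 1)
      (δ ++ ε₁ ++ ρ) (δ ++ ε₂ ++ ρ) := by
  have hb1 : IsKPath (bU H infty i₁ i₂ i₃) 1 (δ ++ ε₁ ++ ρ) :=
    isKPath_bU_of_H hinf hH hJ0 h1
  have hb2 : IsKPath (bU H infty i₁ i₂ i₃) 1 (δ ++ ε₂ ++ ρ) :=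
    isKPath_bU_of_H hinf hH hJ0 h2
  rcases hp with rfl | ⟨x, y, rfl, rfl⟩ | ⟨x, y, z, rfl, rfl, hpath⟩
  · exact homotopicIn_refl hb1 hb1.2.1
  · exact homotopicIn_single hb1 hb1.2.1
      ⟨δ, _, _, ρ, Or.inl (Or.inr (Or.inl ⟨x, y, rfl, rfl⟩)), rfl, rfl⟩ hb2 hb2.2.1
  · have hU : ({x, z} : Finset α) ∪ {z, y} ∈ level H 3 :=
      (List.isChain_cons_cons.mp hpath.2.2).1
    have hxz2 : ({x, z} : Finset α) ∈ level H 2 := hpath.2.1 _ (by simp)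
    have hzy2 : ({z, y} : Finset α) ∈ level H 2 := hpath.2.1 _ (by simp)
    have hxy2 : ({x} : Finset α) ∪ {y} ∈ level H 2 := isKPath_adj h1
    have hxy2' : ({x, y} : Finset α) ∈ level H 2 := by
      rwa [union_singletons] at hxy2
    have hxney : x ≠ y := by
      rintro rfl
      have := hxy2'.2
      simp at this
    have hxnez : x ≠ z := by
      rintro rfl
      have := hxz2.2
      simp at this
    have hzney : z ≠ y := by
      rintro rfl
      have := hzy2.2
      simp at this
    by_cases hU0 : ({x, z} : Finset α) ∪ {z, y} = ({i₁, i₂, i₃} : Finset α)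
    · -- the triangle goes through J0: simulate through infinity
      have hsubxz : ({x, z} : Finset α) ⊆ {i₁, i₂, i₃} := by
        rw [← hU0]; exact Finset.subset_union_left
      have hsubzy : ({z, y} : Finset α) ⊆ {i₁, i₂, i₃} := by
        rw [← hU0]; exact Finset.subset_union_right
      have hsubxy : ({x, y} : Finset α) ⊆ {i₁, i₂, i₃} := by
        intro t ht
        rcases Finset.mem_insert.mp ht with rfl | ht'
        · exact hsubxz (by simp)
        · rw [Finset.mem_singleton] at ht'
          subst ht'
          exact hsubzy (by simp)
      have hxyJ : ({x, y} : Finset α) ∪ {i₁, i₂, i₃} ∈ H := by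
        rw [Finset.union_eq_right.mpr hsubxy]; exact hJ0.1
      have hxzJ : ({x, z} : Finset α) ∪ {i₁, i₂, i₃} ∈ H := by
        rw [Finset.union_eq_right.mpr hsubxz]; exact hJ0.1
      have hzyJ : ({z, y} : Finset α) ∪ {i₁, i₂, i₃} ∈ H := by
        rw [Finset.union_eq_right.mpr hsubzy]; exact hJ0.1
      have hxyH : ({x, y} : Finset α) ∈ H := hxy2'.1
      have hxzH : ({x, z} : Finset α) ∈ H := hxz2.1
      have hzyH : ({z, y} : Finset α) ∈ H := hzy2.1
      have hw1p : IsKPath (bU H infty i₁ i₂ i₃) 1 [{x}, {infty}, {y}] :=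
        path3_infty hinf hH hJ0 (pair_mem_left hH hxyH) (pair_union_left hH hxyJ)
          (pair_mem_right hH hxyH) (pair_union_right hH hxyJ)
      have hw1 : IsKPath (bU H infty i₁ i₂ i₃) 1 (δ ++ [{x}, {infty}, {y}] ++ ρ) :=
        isKPath_glue hb1 hw1p (by simp) (by simp)
      have hm1 : HomotopicIn (bU H infty i₁ i₂ i₃) (level (bU H infty i₁ i₂ i₃) 1)
          (δ ++ [{x}, {y}] ++ ρ) (δ ++ [{x}, {infty}, {y}] ++ ρ) :=
        homotopicIn_single hb1 hb1.2.1
          ⟨δ, _, _, ρ, Or.inl (core_insert_infty hinf hH hJ0 hxney hxyH hxyJ), rfl, rfl⟩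
          hw1 hw1.2.1
      have hw2p : IsKPath (bU H infty i₁ i₂ i₃) 1 [{x}, {z}, {infty}, {y}] := by
        refine ⟨by simp, ?_, ?_⟩
        · intro J hJ
          simp only [List.mem_cons, List.mem_singleton, List.not_mem_nil, or_false] at hJ
          rcases hJ with rfl | rfl | rfl | rfl
          · exact singleton_level_bU hinf hH hJ0 (pair_mem_left hH hxyH)
          · exact singleton_level_bU hinf hH hJ0 (pair_mem_left hH hzyH)
          · exact infty_level_bU hinf hH hJ0
          · exact singleton_level_bU hinf hH hJ0 (pair_mem_right hH hxyH)
        · unfold List.Chain'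
          rw [List.isChain_cons_cons, List.isChain_cons_cons, List.isChain_cons_cons]
          refine ⟨?_, ?_, ?_, List.isChain_singleton _⟩
          · rw [union_singletons]
            exact level2_bU_of_level2 hH hJ0 hxz2
          · rw [union_singletons]
            exact edge_infty_bU hinf hH hJ0 (pair_mem_left hH hzyH)
              (pair_union_left hH hzyJ)
          · rw [union_singletons]
            exact edge_infty_bU' hinf hH hJ0 (pair_mem_right hH hxyH)
              (pair_union_right hH hxyJ)
      have hw2 : IsKPath (bU H infty i₁ i₂ i₃) 1 (δ ++ [{x}, {z}, {infty}, {y}] ++ ρ) :=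
        isKPath_glue hw1 hw2p (by simp) (by simp)
      have htri2 : IsKPath (bU H infty i₁ i₂ i₃) 2 [{x, z}, {z, infty}] := by
        refine isKPath_pair (level2_bU_of_level2 hH hJ0 hxz2)
          (edge_infty_bU hinf hH hJ0 (pair_mem_left hH hzyH)
            (pair_union_left hH hzyJ)) ?_
        have : ({x, z} : Finset α) ∪ {z, infty} = insert infty {x, z} := by
          ext t; simp; tauto
        rw [this]
        exact level3_bU_of_infty hinf hH hJ0 hxzH hxz2.2 hxzJ
      have hm2 : HomotopicIn (bU H infty i₁ i₂ i₃) (level (bU H infty i₁ i₂ i₃) 1)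
          (δ ++ [{x}, {infty}, {y}] ++ ρ) (δ ++ [{x}, {z}, {infty}, {y}] ++ ρ) := by
        refine homotopicIn_single hw1 hw1.2.1
          ⟨δ, [{x}, {infty}], [{x}, {z}, {infty}], [{y}] ++ ρ,
            Or.inl (Or.inr (Or.inr ⟨x, infty, z, rfl, rfl, htri2⟩)), by simp, by simp⟩
          hw2 hw2.2.1
      have hm3 : HomotopicIn (bU H infty i₁ i₂ i₃) (level (bU H infty i₁ i₂ i₃) 1)
          (δ ++ [{x}, {z}, {infty}, {y}] ++ ρ) (δ ++ [{x}, {z}, {y}] ++ ρ) := by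
        refine homotopicIn_single hw2 hw2.2.1
          ⟨δ ++ [{x}], [{z}, {infty}, {y}], [{z}, {y}], ρ,
            Or.inr (core_insert_infty hinf hH hJ0 hzney hzyH hzyJ), by simp, by simp⟩
          hb2 hb2.2.1
      exact homotopicIn_trans hm1 (homotopicIn_trans hm2 hm3)
    · refine homotopicIn_single hb1 hb1.2.1
        ⟨δ, _, _, ρ, Or.inl (Or.inr (Or.inr ⟨x, y, z, rfl, rfl, ?_⟩)), rfl, rfl⟩
        hb2 hb2.2.1
      exact isKPath_pair (level2_bU_of_level2 hH hJ0 hxz2)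
        (level2_bU_of_level2 hH hJ0 hzy2) (level3_bU_of_level3 hH hJ0 hU hU0)

lemma lift_step (hinf : infty ∉ I) (hH : IsCSSOn I H)
    (hJ0 : ({i₁, i₂, i₃} : Finset α) ∈ level H 3) {g₁ g₂ : List (Finset α)}
    (h1 : IsKPath H 1 g₁) (h2 : IsKPath H 1 g₂) (hom : ElemHomotopy H g₁ g₂) :
    HomotopicIn (bU H infty i₁ i₂ i₃) (level (bU H infty i₁ i₂ i₃) 1) g₁ g₂ := by
  obtain ⟨δ, ε₁, ε₂, ρ, hp, rfl, rfl⟩ := hom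
  rcases hp with hc | hc
  · exact lift_core hinf hH hJ0 hc h1 h2
  · exact homotopicIn_symm (lift_core hinf hH hJ0 hc h2 h1)

lemma lift_homotopicIn (hinf : infty ∉ I) (hH : IsCSSOn I H)
    (hJ0 : ({i₁, i₂, i₃} : Finset α) ∈ level H 3) {γ γ' : List (Finset α)}
    (h : HomotopicIn H (level H 1) γ γ') :
    HomotopicIn (bU H infty i₁ i₂ i₃) (level (bU H infty i₁ i₂ i₃) 1) γ γ' := by
  obtain ⟨⟨hγ, hγA⟩, hr⟩ := h
  induction hr with
  | refl =>
      have hb := isKPath_bU_of_H hinf hH hJ0 hγ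
      exact homotopicIn_refl hb hb.2.1
  | @tail b c hab hbc ih =>
      have hb := (rtg_valid_end hab ⟨hγ, hγA⟩).1
      exact homotopicIn_trans ih (lift_step hinf hH hJ0 hb hbc.2.1 hbc.1)

end Blowup4
end BlowupProof
namespace BlowupProof
section Blowup5
set_option linter.unusedSectionVars false

variable {α : Type*} [DecidableEq α] {I : Finset α} {infty : α} {H : Set (Finset α)}
  {i₁ i₂ i₃ : α}

lemma levelH1_ne_infty (hinf : infty ∉ I) (hH : IsCSSOn I H) {X : Finset α}
    (hX : X ∈ level H 1) : X ≠ ({infty} : Finset α) := by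
  rintro rfl
  exact hinf (singleton_mem hH hX.1)

lemma mem_of_getLast?_eq {l : List (Finset α)} {a : Finset α}
    (h : l.getLast? = some a) : a ∈ l := by
  obtain ⟨hne, rfl⟩ := List.mem_getLast?_eq_getLast (Option.mem_def.mpr h)
  exact List.getLast_mem hne

lemma i1_facts (hH : IsCSSOn I H) (hJ0 : ({i₁, i₂, i₃} : Finset α) ∈ level H 3) :
    ({i₁} : Finset α) ∈ H ∧ ({i₁} : Finset α) ∪ {i₁, i₂, i₃} ∈ H := by
  constructor
  · exact sub_J0_mem hH hJ0
      (by intro t; simp only [Finset.mem_singleton, Finset.mem_insert]; tauto)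
  · have : ({i₁} : Finset α) ∪ {i₁, i₂, i₃} = {i₁, i₂, i₃} := by ext t; simp; tauto
    rw [this]; exact hJ0.1

lemma pair_with_i1 (hH : IsCSSOn I H) (hJ0 : ({i₁, i₂, i₃} : Finset α) ∈ level H 3)
    {b : α} (hbJ : ({b} : Finset α) ∪ {i₁, i₂, i₃} ∈ H) (hne : i₁ ≠ b) :
    ({i₁, b} : Finset α) ∈ level H 2 ∧
      ({i₁, b} : Finset α) ∪ {i₁, i₂, i₃} ∈ H := by
  have hsub : ({i₁, b} : Finset α) ⊆ {b} ∪ {i₁, i₂, i₃} := by intro t; simp; tauto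
  have hmem : ({i₁, b} : Finset α) ∈ H := hH.2.1 _ hbJ _ hsub
  have hcard : ({i₁, b} : Finset α).card = 2 := by
    rw [Finset.card_insert_of_notMem (by simp [hne]), Finset.card_singleton]
  refine ⟨⟨hmem, hcard⟩, ?_⟩
  have : ({i₁, b} : Finset α) ∪ {i₁, i₂, i₃} = {b} ∪ {i₁, i₂, i₃} := by
    ext t; simp; tauto
  rw [this]; exact hbJ

lemma edge_to_infty (hinf : infty ∉ I) (hH : IsCSSOn I H)
    (hJ0 : ({i₁, i₂, i₃} : Finset α) ∈ level H 3) {X : Finset α}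
    (hX : X ∈ level H 1)
    (he : X ∪ {infty} ∈ level (bU H infty i₁ i₂ i₃) 2) :
    ∃ b, X = ({b} : Finset α) ∧ ({b} : Finset α) ∈ H ∧
      ({b} : Finset α) ∪ {i₁, i₂, i₃} ∈ H := by
  obtain ⟨b, rfl⟩ := Finset.card_eq_one.mp hX.2
  obtain ⟨c, hc, hcJ, heq⟩ := level2_bU_infty hinf hH hJ0 he (by simp)
  have hbc : b = c := by
    have hbmem : b ∈ insert infty ({c} : Finset α) := by rw [← heq]; simp
    have hbne : b ≠ infty := by rintro rfl; exact hinf (singleton_mem hH hX.1)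
    rcases Finset.mem_insert.mp hbmem with h | h
    · exact absurd h hbne
    · exact Finset.mem_singleton.mp h
  subst hbc
  exact ⟨b, rfl, hX.1, hcJ⟩

set_option maxHeartbeats 2000000 in
lemma normalize (hinf : infty ∉ I) (hH : IsCSSOn I H)
    (hJ0 : ({i₁, i₂, i₃} : Finset α) ∈ level H 3) :
    ∀ γ : List (Finset α), IsKPath (bU H infty i₁ i₂ i₃) 1 γ →
      ∃ s L τ R : List (Finset α),
        HomotopicIn (bU H infty i₁ i₂ i₃) (level (bU H infty i₁ i₂ i₃) 1) γ s ∧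
        s = L ++ τ ++ R ∧ IsKPath H 1 τ ∧
        (L = [] ∨ (L = [({infty} : Finset α)] ∧ τ.head? = some {i₁})) ∧
        (R = [] ∨ (R = [({infty} : Finset α)] ∧ τ.getLast? = some {i₁})) := by
  intro γ
  induction γ using List.reverseRecOn with
  | nil => intro h; exact absurd rfl h.1
  | append_singleton σ J ih =>
    intro h
    have hi1 := i1_facts hH hJ0
    have hJ1 : J ∈ level (bU H infty i₁ i₂ i₃) 1 := h.2.1 J (by simp)
    rcases eq_or_ne σ [] with rfl | hσne
    · simp only [List.nil_append] at h ⊢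
      rcases (level1_bU_iff hinf hH hJ0).mp hJ1 with hJA | rfl
      · exact ⟨[J], [], [J], [], homotopicIn_refl h h.2.1, by simp,
          isKPath_singleton hJA, Or.inl rfl, Or.inl rfl⟩
      · -- γ = [{infty}]
        have hval : IsKPath (bU H infty i₁ i₂ i₃) 1 [{infty}, {i₁}, {infty}] := by
          refine ⟨by simp, ?_, ?_⟩
          · intro K hK
            simp only [List.mem_cons, List.mem_singleton, List.not_mem_nil, or_false] at hK
            rcases hK with rfl | rfl | rfl
            · exact infty_level_bU hinf hH hJ0
            · exact singleton_level_bU hinf hH hJ0 hi1.1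
            · exact infty_level_bU hinf hH hJ0
          · unfold List.Chain'
            rw [List.isChain_cons_cons, List.isChain_cons_cons]
            refine ⟨?_, ?_, List.isChain_singleton _⟩
            · rw [union_singletons]
              exact edge_infty_bU' hinf hH hJ0 hi1.1 hi1.2
            · rw [union_singletons]
              exact edge_infty_bU hinf hH hJ0 hi1.1 hi1.2
        refine ⟨[{infty}, {i₁}, {infty}], [{infty}], [{i₁}], [{infty}],
          homotopicIn_single h h.2.1
            ⟨[], [({infty} : Finset α)], [{infty}, {i₁}, {infty}], [],
              Or.inr (Or.inr (Or.inl ⟨infty, i₁, rfl, rfl⟩)), by simp, by simp⟩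
            hval hval.2.1,
          by simp, isKPath_singleton ⟨hi1.1, by simp⟩, Or.inr ⟨rfl, rfl⟩,
          Or.inr ⟨rfl, rfl⟩⟩
    · -- σ nonempty
      have hσ : IsKPath (bU H infty i₁ i₂ i₃) 1 σ := isKPath_append_left h hσne
      obtain ⟨s, L, τ, R, hhom, rfl, hτ, hL, hR⟩ := ih hσ
      have hτne : τ ≠ [] := hτ.1
      have hmemJ : ∀ K ∈ ([] : List (Finset α)) ++ [J],
          K ∈ level (bU H infty i₁ i₂ i₃) 1 := by
        intro K hK
        simp only [List.nil_append, List.mem_singleton] at hK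
        subst hK; exact hJ1
      have hγs : HomotopicIn (bU H infty i₁ i₂ i₃) (level (bU H infty i₁ i₂ i₃) 1)
          (σ ++ [J]) ((L ++ τ ++ R) ++ [J]) := by
        have h' : IsKPath (bU H infty i₁ i₂ i₃) 1 ([] ++ σ ++ [J]) := by simpa using h
        simpa using homotopicIn_conj hhom h' hmemJ
      have hvalsJ : IsKPath (bU H infty i₁ i₂ i₃) 1 ((L ++ τ ++ R) ++ [J]) :=
        (homotopicIn_valid_end hγs).1
      rcases hR with rfl | ⟨rfl, hlast⟩
      · -- R = []
        obtain ⟨X, hXlast⟩ : ∃ X, τ.getLast? = some X := by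
          cases hX : τ.getLast? with
          | none => exact absurd (List.getLast?_eq_none_iff.mp hX) hτne
          | some X => exact ⟨X, rfl⟩
        have hX1 : X ∈ level H 1 := hτ.2.1 X (mem_of_getLast?_eq hXlast)
        have hedge : X ∪ J ∈ level (bU H infty i₁ i₂ i₃) 2 := by
          refine isKPath_junction hvalsJ X ?_ J rfl
          simp only [List.append_nil]
          rw [List.getLast?_append_of_ne_nil _ hτne]
          exact hXlast
        rcases eq_or_ne J ({infty} : Finset α) with rfl | hJne
        · -- appending {infty}
          obtain ⟨b, rfl, hb, hbJ⟩ := edge_to_infty hinf hH hJ0 hX1 hedge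
          rcases eq_or_ne b i₁ with rfl | hbne
          · -- already canonical
            exact ⟨(L ++ τ ++ []) ++ [{infty}], L, τ, [{infty}], hγs, by simp,
              hτ, hL, Or.inr ⟨rfl, hXlast⟩⟩
          · -- insert {i₁} before {infty}
            have hpair := pair_with_i1 hH hJ0 hbJ (Ne.symm hbne)
            have hbi1 : ({b, i₁} : Finset α) ∈ level H 2 := by
              have : ({b, i₁} : Finset α) = ({i₁, b} : Finset α) := by ext t; simp; tauto
              rw [this]; exact hpair.1
            have hτd : τ.dropLast ++ [({b} : Finset α)] = τ :=
              List.dropLast_append_getLast? _ (Option.mem_def.mpr hXlast)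
            have htri : IsKPath (bU H infty i₁ i₂ i₃) 2 [{b, i₁}, {i₁, infty}] := by
              refine isKPath_pair (level2_bU_of_level2 hH hJ0 hbi1)
                (edge_infty_bU hinf hH hJ0 hi1.1 hi1.2) ?_
              have : ({b, i₁} : Finset α) ∪ {i₁, infty} = insert infty {i₁, b} := by
                ext t; simp; tauto
              rw [this]
              exact level3_bU_of_infty hinf hH hJ0 hpair.1.1 hpair.1.2 hpair.2
            have heq1 : (L ++ τ ++ []) ++ [({infty} : Finset α)] =
                (L ++ τ.dropLast) ++ [({b} : Finset α), {infty}] ++ [] := by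
              rw [← hτd]; simp
            have hnewpath : IsKPath (bU H infty i₁ i₂ i₃) 1
                [({b} : Finset α), {i₁}, {infty}] := by
              refine ⟨by simp, ?_, ?_⟩
              · intro K hK
                simp only [List.mem_cons, List.mem_singleton, List.not_mem_nil,
                  or_false] at hK
                rcases hK with rfl | rfl | rfl
                · exact singleton_level_bU hinf hH hJ0 hb
                · exact singleton_level_bU hinf hH hJ0 hi1.1
                · exact infty_level_bU hinf hH hJ0
              · unfold List.Chain'
                rw [List.isChain_cons_cons, List.isChain_cons_cons]
                refine ⟨?_, ?_, List.isChain_singleton _⟩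
                · rw [union_singletons]
                  exact level2_bU_of_level2 hH hJ0 hbi1
                · rw [union_singletons]
                  exact edge_infty_bU hinf hH hJ0 hi1.1 hi1.2
            have hvalnew : IsKPath (bU H infty i₁ i₂ i₃) 1
                ((L ++ τ.dropLast) ++ [({b} : Finset α), {i₁}, {infty}] ++ []) :=
              isKPath_glue (heq1 ▸ hvalsJ) hnewpath (by simp) (by simp)
            have hstep : HomotopicIn (bU H infty i₁ i₂ i₃)
                (level (bU H infty i₁ i₂ i₃) 1) ((L ++ τ ++ []) ++ [{infty}])
                ((L ++ τ.dropLast) ++ [({b} : Finset α), {i₁}, {infty}] ++ []) := by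
              refine homotopicIn_single hvalsJ hvalsJ.2.1
                ⟨L ++ τ.dropLast, [({b} : Finset α), {infty}],
                  [({b} : Finset α), {i₁}, {infty}], [],
                  Or.inl (Or.inr (Or.inr ⟨b, infty, i₁, rfl, rfl, htri⟩)),
                  heq1, rfl⟩ hvalnew hvalnew.2.1
            refine ⟨(L ++ τ.dropLast) ++ [({b} : Finset α), {i₁}, {infty}] ++ [], L,
              τ ++ [({i₁} : Finset α)], [{infty}], homotopicIn_trans hγs hstep,
              by rw [← hτd]; simp, ?_, ?_, Or.inr ⟨rfl, by simp⟩⟩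
            · refine isKPath_append hτ (isKPath_singleton ⟨hi1.1, by simp⟩) ?_
              intro x hx y hy
              simp only [Option.mem_def] at hx hy
              rw [hXlast] at hx
              simp only [List.head?_cons, Option.some.injEq] at hx hy
              subst hx; subst hy
              rw [union_singletons]
              exact hbi1
            · rcases hL with rfl | ⟨rfl, hhead⟩
              · exact Or.inl rfl
              · refine Or.inr ⟨rfl, ?_⟩
                rw [List.head?_append_of_ne_nil _ hτne]
                exact hhead
        · -- appending an ordinary stratum
          have hJA : J ∈ level H 1 :=
            ((level1_bU_iff hinf hH hJ0).mp hJ1).resolve_right hJne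
          have hXJ : infty ∉ X ∪ J := by
            intro ht
            rcases Finset.mem_union.mp ht with ht | ht
            · exact hinf (hH.1 X hX1.1 ht)
            · exact hinf (hH.1 J hJA.1 ht)
          have hedgeH : X ∪ J ∈ level H 2 := level2_bU_no_infty hinf hH hJ0 hedge hXJ
          refine ⟨(L ++ τ ++ []) ++ [J], L, τ ++ [J], [], hγs, by simp, ?_, ?_,
            Or.inl rfl⟩
          · refine isKPath_append hτ (isKPath_singleton hJA) ?_
            intro x hx y hy
            simp only [Option.mem_def] at hx hy
            rw [hXlast] at hx
            simp only [List.head?_cons, Option.some.injEq] at hx hy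
            subst hx; subst hy
            exact hedgeH
          · rcases hL with rfl | ⟨rfl, hhead⟩
            · exact Or.inl rfl
            · refine Or.inr ⟨rfl, ?_⟩
              rw [List.head?_append_of_ne_nil _ hτne]
              exact hhead
      · -- R = [{infty}]
        have hτd : τ.dropLast ++ [({i₁} : Finset α)] = τ :=
          List.dropLast_append_getLast? _ (Option.mem_def.mpr hlast)
        have hedge : ({infty} : Finset α) ∪ J ∈ level (bU H infty i₁ i₂ i₃) 2 := by
          refine isKPath_junction hvalsJ {infty} ?_ J rfl
          rw [List.getLast?_append_of_ne_nil _ (by simp : [({infty} : Finset α)] ≠ [])]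
          simp
        have hJne : J ≠ ({infty} : Finset α) := by
          rintro rfl
          have := hedge.2
          simp at this
        have hJA : J ∈ level H 1 :=
          ((level1_bU_iff hinf hH hJ0).mp hJ1).resolve_right hJne
        obtain ⟨b, rfl, hb, hbJ⟩ := by
          refine edge_to_infty hinf hH hJ0 hJA ?_
          rwa [Finset.union_comm] at hedge
        rcases eq_or_ne b i₁ with rfl | hbne
        · -- spur removal (here i₁ has been substituted by b)
          have heq1 : (L ++ τ ++ [({infty} : Finset α)]) ++ [({b} : Finset α)] =
              (L ++ τ.dropLast) ++ [({b} : Finset α), {infty}, {b}] ++ [] := by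
            rw [← hτd]; simp
          have hvalnew : IsKPath (bU H infty b i₂ i₃) 1
              ((L ++ τ.dropLast) ++ [({b} : Finset α)] ++ []) :=
            isKPath_glue (heq1 ▸ hvalsJ)
              (isKPath_singleton (singleton_level_bU hinf hH hJ0 hi1.1))
              (by simp) (by simp)
          have hstep : HomotopicIn (bU H infty b i₂ i₃)
              (level (bU H infty b i₂ i₃) 1)
              ((L ++ τ ++ [({infty} : Finset α)]) ++ [({b} : Finset α)])
              ((L ++ τ.dropLast) ++ [({b} : Finset α)] ++ []) := by
            refine homotopicIn_single hvalsJ hvalsJ.2.1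
              ⟨L ++ τ.dropLast, [({b} : Finset α), {infty}, {b}],
                [({b} : Finset α)], [],
                Or.inl (Or.inr (Or.inl ⟨b, infty, rfl, rfl⟩)), heq1, rfl⟩
              hvalnew hvalnew.2.1
          refine ⟨(L ++ τ.dropLast) ++ [({b} : Finset α)] ++ [], L, τ, [],
            homotopicIn_trans hγs hstep, by rw [← hτd]; simp, hτ, hL, Or.inl rfl⟩
        · -- remove the {infty} via triangle
          have hpair := pair_with_i1 hH hJ0 hbJ (Ne.symm hbne)
          have htri : IsKPath (bU H infty i₁ i₂ i₃) 2 [{i₁, infty}, {infty, b}] := by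
            refine isKPath_pair (edge_infty_bU hinf hH hJ0 hi1.1 hi1.2)
              (edge_infty_bU' hinf hH hJ0 hb hbJ) ?_
            have : ({i₁, infty} : Finset α) ∪ {infty, b} = insert infty {i₁, b} := by
              ext t; simp; tauto
            rw [this]
            exact level3_bU_of_infty hinf hH hJ0 hpair.1.1 hpair.1.2 hpair.2
          have heq1 : (L ++ τ ++ [({infty} : Finset α)]) ++ [({b} : Finset α)] =
              (L ++ τ.dropLast) ++ [({i₁} : Finset α), {infty}, {b}] ++ [] := by
            rw [← hτd]; simp
          have hnewpath : IsKPath (bU H infty i₁ i₂ i₃) 1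
              [({i₁} : Finset α), {b}] := by
            refine isKPath_pair (singleton_level_bU hinf hH hJ0 hi1.1)
              (singleton_level_bU hinf hH hJ0 hb) ?_
            rw [union_singletons]
            exact level2_bU_of_level2 hH hJ0 hpair.1
          have hvalnew : IsKPath (bU H infty i₁ i₂ i₃) 1
              ((L ++ τ.dropLast) ++ [({i₁} : Finset α), {b}] ++ []) :=
            isKPath_glue (heq1 ▸ hvalsJ) hnewpath (by simp) (by simp)
          have hstep : HomotopicIn (bU H infty i₁ i₂ i₃)
              (level (bU H infty i₁ i₂ i₃) 1)
              ((L ++ τ ++ [({infty} : Finset α)]) ++ [({b} : Finset α)])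
              ((L ++ τ.dropLast) ++ [({i₁} : Finset α), {b}] ++ []) := by
            refine homotopicIn_single hvalsJ hvalsJ.2.1
              ⟨L ++ τ.dropLast, [({i₁} : Finset α), {infty}, {b}],
                [({i₁} : Finset α), {b}], [],
                Or.inr (Or.inr (Or.inr ⟨i₁, b, infty, rfl, rfl, htri⟩)), heq1, rfl⟩
              hvalnew hvalnew.2.1
          refine ⟨(L ++ τ.dropLast) ++ [({i₁} : Finset α), {b}] ++ [], L,
            τ ++ [({b} : Finset α)], [], homotopicIn_trans hγs hstep,
            by rw [← hτd]; simp, ?_, ?_, Or.inl rfl⟩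
          · refine isKPath_append hτ (isKPath_singleton hJA) ?_
            intro x hx y hy
            simp only [Option.mem_def] at hx hy
            rw [hlast] at hx
            simp only [List.head?_cons, Option.some.injEq] at hx hy
            subst hx; subst hy
            rw [union_singletons]
            exact hpair.1
          · rcases hL with rfl | ⟨rfl, hhead⟩
            · exact Or.inl rfl
            · refine Or.inr ⟨rfl, ?_⟩
              rw [List.head?_append_of_ne_nil _ hτne]
              exact hhead

end Blowup5
end BlowupProof
namespace BlowupProof
section Blowup6
set_option linter.unusedSectionVars false

variable {α : Type*} [DecidableEq α] {I : Finset α} {infty : α} {H : Set (Finset α)}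
  {i₁ i₂ i₃ : α}

lemma head_ne_inf (hinf : infty ∉ I) (hH : IsCSSOn I H) {τ : List (Finset α)}
    (hτ : IsKPath H 1 τ) : τ.head? ≠ some ({infty} : Finset α) := by
  intro hhead
  have hm : ({infty} : Finset α) ∈ τ := List.mem_of_mem_head? (Option.mem_def.mpr hhead)
  exact levelH1_ne_infty hinf hH (hτ.2.1 _ hm) rfl

lemma last_ne_inf (hinf : infty ∉ I) (hH : IsCSSOn I H) {τ : List (Finset α)}
    (hτ : IsKPath H 1 τ) : τ.getLast? ≠ some ({infty} : Finset α) := by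
  intro hlast
  exact levelH1_ne_infty hinf hH (hτ.2.1 _ (mem_of_getLast?_eq hlast)) rfl

set_option maxHeartbeats 1000000 in
lemma simplyConnected_bU (hinf : infty ∉ I) (hH : IsCSSOn I H)
    (hsc : SimplyConnected H) (hJ0 : ({i₁, i₂, i₃} : Finset α) ∈ level H 3) :
    SimplyConnected (bU H infty i₁ i₂ i₃) := by
  constructor
  · exact oneConnected_bU hinf hH hsc hJ0
  · intro γ γ' hγ hγ' hsγ hsγ' hhead hlast
    obtain ⟨s, L, τ, R, hom1, rfl, hτ, hL, hR⟩ := normalize hinf hH hJ0 γ hγ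
    obtain ⟨s', L', τ', R', hom2, rfl, hτ', hL', hR'⟩ := normalize hinf hH hJ0 γ' hγ'
    have hends1 := homotopicIn_ends hom1
    have hends2 := homotopicIn_ends hom2
    have hh : (L ++ τ ++ R).head? = (L' ++ τ' ++ R').head? := by
      rw [← hends1.1, ← hends2.1, hhead]
    have hl : (L ++ τ ++ R).getLast? = (L' ++ τ' ++ R').getLast? := by
      rw [← hends1.2, ← hends2.2, hlast]
    have hLL : L = L' ∧ τ.head? = τ'.head? := by
      rcases hL with hL0 | ⟨hL0, hh1⟩ <;> rcases hL' with hL0' | ⟨hL0', hh1'⟩ <;>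
        subst hL0 <;> subst hL0'
      · rw [List.nil_append, List.nil_append,
          List.head?_append_of_ne_nil τ hτ.1, List.head?_append_of_ne_nil τ' hτ'.1] at hh
        exact ⟨rfl, hh⟩
      · exfalso
        rw [List.nil_append, List.head?_append_of_ne_nil τ hτ.1] at hh
        simp only [List.cons_append, List.head?_cons] at hh
        exact head_ne_inf hinf hH hτ hh
      · exfalso
        rw [List.nil_append, List.head?_append_of_ne_nil τ' hτ'.1] at hh
        simp only [List.cons_append, List.head?_cons] at hh
        exact head_ne_inf hinf hH hτ' hh.symm
      · exact ⟨rfl, hh1.trans hh1'.symm⟩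
    have hRR : R = R' ∧ τ.getLast? = τ'.getLast? := by
      rcases hR with hR0 | ⟨hR0, hl1⟩ <;> rcases hR' with hR0' | ⟨hR0', hl1'⟩ <;>
        subst hR0 <;> subst hR0'
      · rw [List.append_nil, List.append_nil,
          List.getLast?_append_of_ne_nil L hτ.1,
          List.getLast?_append_of_ne_nil L' hτ'.1] at hl
        exact ⟨rfl, hl⟩
      · exfalso
        rw [List.append_nil, List.getLast?_append_of_ne_nil L hτ.1,
          List.getLast?_append_of_ne_nil _ (by simp :
            [({infty} : Finset α)] ≠ [])] at hl
        simp only [List.getLast?_singleton] at hl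
        exact last_ne_inf hinf hH hτ hl
      · exfalso
        rw [List.append_nil, List.getLast?_append_of_ne_nil L' hτ'.1,
          List.getLast?_append_of_ne_nil _ (by simp :
            [({infty} : Finset α)] ≠ [])] at hl
        simp only [List.getLast?_singleton] at hl
        exact last_ne_inf hinf hH hτ' hl.symm
      · exact ⟨rfl, hl1.trans hl1'.symm⟩
    obtain ⟨hLeq, hτhead⟩ := hLL
    obtain ⟨hReq, hτlast⟩ := hRR
    subst hLeq
    subst hReq
    have hHomH : HomotopicIn H (level H 1) τ τ' :=
      hsc.2 τ τ' hτ hτ' hτ.2.1 hτ'.2.1 hτhead hτlast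
    have hlift := lift_homotopicIn hinf hH hJ0 hHomH
    have hvalid : IsKPath (bU H infty i₁ i₂ i₃) 1 (L ++ τ ++ R) :=
      (homotopicIn_valid_end hom1).1
    have hmemLR : ∀ K ∈ L ++ R, K ∈ level (bU H infty i₁ i₂ i₃) 1 := by
      intro K hK
      rcases List.mem_append.mp hK with hK | hK
      · rcases hL with rfl | ⟨rfl, -⟩
        · simp at hK
        · simp only [List.mem_singleton] at hK
          subst hK; exact infty_level_bU hinf hH hJ0
      · rcases hR with rfl | ⟨rfl, -⟩
        · simp at hK
        · simp only [List.mem_singleton] at hK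
          subst hK; exact infty_level_bU hinf hH hJ0
    have hconj := homotopicIn_conj (pre := L) (post := R) hlift hvalid hmemLR
    exact homotopicIn_trans hom1 (homotopicIn_trans hconj (homotopicIn_symm hom2))

end Blowup6
end BlowupProof
/-- (Blow-up of a three-codimensional stratum.) If `H` is simply
connected, `∞ ∉ I`, `J₀ = {i₁,i₂,i₃} ∈ H(3)` and
`B = {J ∈ H : #J ≤ 2 and J ∪ J₀ ∈ H}`, then
`H' = (H_3 \ {J₀}) ∪ {J ∪ {∞} : J ∈ B}` is a simply connected combinatorial strata
structure with minimal set of indices `I ∪ {∞}`. -/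
theorem blowup_point_center_simplyConnected
    {α : Type*} [Fintype α] [DecidableEq α] (I : Finset α) (infty : α)
    (hinfty : infty ∉ I) (H : Set (Finset α)) (hH : IsCSSOn I H)
    (hsc : SimplyConnected H) (i₁ i₂ i₃ : α)
    (hJ0 : ({i₁, i₂, i₃} : Finset α) ∈ level H 3) :
    IsCSSOn (insert infty I)
        ((H3 H \ {({i₁, i₂, i₃} : Finset α)}) ∪
          {K : Finset α | ∃ J ∈ H, J.card ≤ 2 ∧
            J ∪ ({i₁, i₂, i₃} : Finset α) ∈ H ∧ K = insert infty J}) ∧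
      SimplyConnected
        ((H3 H \ {({i₁, i₂, i₃} : Finset α)}) ∪
          {K : Finset α | ∃ J ∈ H, J.card ≤ 2 ∧
            J ∪ ({i₁, i₂, i₃} : Finset α) ∈ H ∧ K = insert infty J}) := by
  constructor
  · exact BlowupProof.bU_isCSSOn hinfty hH hJ0
  · exact BlowupProof.simplyConnected_bU hinfty hH hsc hJ0
end
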